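/- arXiv:1405.0096 — 4 statements merged into one kernel-verified Lean document; each statement's English description precedes it below -/
import Mathlib

section
/- Let H_u and H_v be two disjoint graphs of order m such that H_u − u and H_v − v are both r_1-regular, where m ≥ 2 and r_1 ≥ 1. If H_u and H_v have the same adjacency spectrum (are A-cospectral), then the pocket graphs G[F,V_k,H_u] and G[F,V_k,H_v] are A-cospectral. -/
open Matrix BigOperators
open scoped Classical

/-- The adjacency matrix of a simple graph, with entries in `R`. -/
noncomputable def adjMat (R : Type*) [Zero R] [One R] {V : Type*} [Fintype V]
    (G : SimpleGraph V) : Matrix V V R :=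
  Matrix.of fun x y => if G.Adj x y then (1 : R) else 0

/-- The degree of a vertex. -/
noncomputable def gdeg {V : Type*} [Fintype V] (G : SimpleGraph V) (x : V) : ℕ :=
  (Finset.univ.filter fun y => G.Adj x y).card

/-- `G` is `r`-regular. -/
def IsReg {V : Type*} [Fintype V] (G : SimpleGraph V) (r : ℕ) : Prop :=
  ∀ x, gdeg G x = r

/-- The signless Laplacian matrix `Q(G) = D(G) + A(G)`. -/
noncomputable def qMat (R : Type*) [AddMonoidWithOne R] {V : Type*} [Fintype V]
    (G : SimpleGraph V) : Matrix V V R :=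
  Matrix.diagonal (fun x => (gdeg G x : R)) + adjMat R G

/-- The adjacency spectrum, as the multiset of real roots (with multiplicity) of the
characteristic polynomial of the (real symmetric) adjacency matrix. -/
noncomputable def aSpec {V : Type*} [Fintype V] (G : SimpleGraph V) : Multiset ℝ :=
  (adjMat ℝ G).charpoly.roots

/-- The signless Laplacian spectrum. -/
noncomputable def qSpec {V : Type*} [Fintype V] (G : SimpleGraph V) : Multiset ℝ :=
  (qMat ℝ G).charpoly.roots

/-- The `M`-coronal `Γ_M(x) = 1ᵀ (xI − M)⁻¹ 1`, the sum of the entries of `(xI − M)⁻¹`. -/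
noncomputable def coronal {n R : Type*} [Fintype n] [DecidableEq n] [Field R]
    (M : Matrix n n R) (x : R) : R :=
  ∑ i, ∑ j, ((x • (1 : Matrix n n R) - M)⁻¹) i j

/-- Embeds a `P × P` matrix as a `V × V` matrix supported on the image of `g`, zero elsewhere.
If the vertices of `V` are ordered listing the image of `g` first, this is `diag(M, 0)`. -/
noncomputable def embedMatrix {P V R : Type*} [Fintype P] [AddCommMonoid R]
    (g : P → V) (M : Matrix P P R) : Matrix V V R :=
  Matrix.of fun x y => ∑ px : P, ∑ py : P, if x = g px ∧ y = g py then M px py else 0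

/-- The graph `H − v` obtained by deleting the vertex `v`. -/
def delVert {W : Type*} (H : SimpleGraph W) (v : W) : SimpleGraph {w : W // w ≠ v} :=
  H.comap Subtype.val

/-- The graph `H − {u,v}` obtained by deleting the two vertices `u, v`. -/
def delVert2 {W : Type*} (H : SimpleGraph W) (u v : W) :
    SimpleGraph {w : W // w ≠ u ∧ w ≠ v} :=
  H.comap Subtype.val

/-- The join `G₁ ∨ G₂` of two vertex-disjoint graphs: their disjoint union together with all
edges between the two parts. -/
def sgJoin {α β : Type*} (G₁ : SimpleGraph α) (G₂ : SimpleGraph β) : SimpleGraph (α ⊕ β) where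
  Adj x y :=
    match x, y with
    | Sum.inl a, Sum.inl b => G₁.Adj a b
    | Sum.inl _, Sum.inr _ => True
    | Sum.inr _, Sum.inl _ => True
    | Sum.inr a, Sum.inr b => G₂.Adj a b
  symm := by
    constructor
    rintro (a | a) (b | b) h
    · exact G₁.adj_symm h
    · trivial
    · trivial
    · exact G₂.adj_symm h
  loopless := by
    constructor
    rintro (a | a) h
    · exact G₁.loopless.irrefl a h
    · exact G₂.loopless.irrefl a h

/-- The graph `G[F, V_k, H_v]` with `k` pockets: take one copy of `F` and `k` disjoint copies
of `H` (with specified vertex `v`), identifying the vertex `v` of the `i`-th copy with the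
vertex `f i` of `F`.  The `i`-th copy of `H − v` is carried by `{i} × {w // w ≠ v}`. -/
def pocketGraph {V W : Type*} (F : SimpleGraph V) (H : SimpleGraph W) (v : W)
    {k : ℕ} (f : Fin k ↪ V) : SimpleGraph (V ⊕ (Fin k × {w : W // w ≠ v})) where
  Adj x y :=
    match x, y with
    | Sum.inl a, Sum.inl b => F.Adj a b
    | Sum.inl a, Sum.inr (i, w) => a = f i ∧ H.Adj v w.1
    | Sum.inr (i, w), Sum.inl a => a = f i ∧ H.Adj v w.1
    | Sum.inr (i, w), Sum.inr (j, w') => i = j ∧ H.Adj w.1 w'.1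
  symm := by
    constructor
    rintro (a | ⟨i, w⟩) (b | ⟨j, w'⟩) h
    · exact F.adj_symm h
    · exact h
    · exact h
    · exact ⟨h.1.symm, H.adj_symm h.2⟩
  loopless := by
    constructor
    rintro (a | ⟨i, w⟩) h
    · exact F.loopless.irrefl a h
    · exact H.loopless.irrefl _ h.2

/-- The graph `G[F, E_k, H_{uv}]` with `k` edge-pockets: take one copy of `F` and `k` disjoint
copies of `H` (with specified edge `uv`), pasting the edge `uv` of the `i`-th copy onto the
edge `e_i = (a i)(b i)` of `F` (identifying `u` with `a i` and `v` with `b i`).  The `i`-th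
copy of `H − {u,v}` is carried by `{i} × {w // w ≠ u ∧ w ≠ v}`. -/
def edgePocketGraph {V W : Type*} (F : SimpleGraph V) (H : SimpleGraph W) (u v : W)
    {k : ℕ} (a b : Fin k → V) :
    SimpleGraph (V ⊕ (Fin k × {w : W // w ≠ u ∧ w ≠ v})) where
  Adj x y :=
    match x, y with
    | Sum.inl s, Sum.inl t => F.Adj s t
    | Sum.inl s, Sum.inr (i, w) => (s = a i ∧ H.Adj u w.1) ∨ (s = b i ∧ H.Adj v w.1)
    | Sum.inr (i, w), Sum.inl s => (s = a i ∧ H.Adj u w.1) ∨ (s = b i ∧ H.Adj v w.1)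
    | Sum.inr (i, w), Sum.inr (j, w') => i = j ∧ H.Adj w.1 w'.1
  symm := by
    constructor
    rintro (s | ⟨i, w⟩) (t | ⟨j, w'⟩) h
    · exact F.adj_symm h
    · exact h
    · exact h
    · exact ⟨h.1.symm, H.adj_symm h.2⟩
  loopless := by
    constructor
    rintro (s | ⟨i, w⟩) h
    · exact F.loopless.irrefl s h
    · exact H.loopless.irrefl _ h.2

section CospectralAux

open Polynomial

variable {n : Type*} [Fintype n] [DecidableEq n]

/-- Evaluating the characteristic polynomial gives the determinant of `x • 1 - M`. -/
lemma myEvalCharpoly (M : Matrix n n ℝ) (x : ℝ) :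
    M.charpoly.eval x = (x • (1 : Matrix n n ℝ) - M).det := by
  rw [Matrix.charpoly, ← Polynomial.coe_evalRingHom, RingHom.map_det]
  congr 1
  ext i j
  by_cases h : i = j <;>
    simp [Matrix.charmatrix_apply, Matrix.map_apply, Matrix.one_apply,
      Matrix.diagonal_apply, h, Matrix.sub_apply, Matrix.smul_apply, smul_eq_mul]

/-- A real symmetric matrix has a splitting characteristic polynomial. -/
lemma charpoly_eq_prod_of_symm (A : Matrix n n ℝ) (hA : A.IsHermitian) :
    A.charpoly = (A.charpoly.roots.map fun a => X - C a).prod := by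
  have key : A.charpoly
      = ((Finset.univ.val.map hA.eigenvalues).map fun a => X - C a).prod := by
    apply Polynomial.funext
    intro x
    rw [myEvalCharpoly, Polynomial.eval_multiset_prod, Multiset.map_map, Multiset.map_map]
    set Vv : Matrix n n ℝ := (hA.eigenvectorUnitary : Matrix n n ℝ) with hVv
    have hunit : Vv * star Vv = 1 :=
      (Matrix.mem_unitaryGroup_iff).mp hA.eigenvectorUnitary.2
    have hspec : A = Vv * Matrix.diagonal hA.eigenvalues * star Vv := by
      have h := hA.spectral_theorem
      rwa [RCLike.ofReal_real_eq_id, Function.id_comp] at h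
    have hdiag : x • (1 : Matrix n n ℝ) - A
        = Vv * (x • (1 : Matrix n n ℝ) - Matrix.diagonal hA.eigenvalues) * star Vv := by
      rw [Matrix.mul_sub, Matrix.sub_mul, Matrix.mul_smul, Matrix.mul_one,
        Matrix.smul_mul, hunit, ← hspec]
    rw [hdiag, Matrix.det_mul, Matrix.det_mul]
    have hdet1 : Vv.det * (x • (1 : Matrix n n ℝ) - Matrix.diagonal hA.eigenvalues).det
        * (star Vv).det
        = (x • (1 : Matrix n n ℝ) - Matrix.diagonal hA.eigenvalues).det
          * (Vv * star Vv).det := by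
      rw [Matrix.det_mul]; ring
    rw [hdet1, hunit, Matrix.det_one, mul_one, Matrix.smul_one_eq_diagonal,
      Matrix.diagonal_sub, Matrix.det_diagonal]
    rw [Finset.prod_eq_multiset_prod]
    simp [Function.comp]
  have hroots : A.charpoly.roots = Finset.univ.val.map hA.eigenvalues := by
    rw [key, Polynomial.roots_multiset_prod_X_sub_C]
  rw [hroots]
  exact key

lemma adjMat_isHermitian {V : Type*} [Fintype V] (G : SimpleGraph V) :
    (adjMat ℝ G).IsHermitian := by
  show _ᴴ = _
  ext i j
  simp [Matrix.conjTranspose_apply, adjMat, SimpleGraph.adj_comm]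

lemma adj_rowsum {V : Type*} [Fintype V] (G : SimpleGraph V) (w : V) :
    ∑ w', adjMat ℝ G w w' = (gdeg G w : ℝ) := by
  simp [adjMat, gdeg]

lemma inv_rowsum {S : Type*} [Fintype S] [DecidableEq S] (M E : Matrix S S ℝ) (c : ℝ) (hc : c ≠ 0)
    (hEM : E * M = 1) (hrow : ∀ i, ∑ j, M i j = c) (i : S) : ∑ j, E i j = c⁻¹ := by
  have h1 : M.mulVec (fun _ => 1) = fun _ => c := by
    funext i
    simp [Matrix.mulVec, dotProduct, hrow i]
  have h2 : E.mulVec (M.mulVec fun _ => 1) = fun _ => 1 := by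
    rw [Matrix.mulVec_mulVec, hEM]
    funext j
    simp [Matrix.one_mulVec]
  rw [h1] at h2
  have h3 := congrFun h2 i
  simp only [Matrix.mulVec, dotProduct] at h3
  have h4 : (∑ j, E i j) * c = 1 := by
    rw [Finset.sum_mul]
    simpa using h3
  exact eq_inv_of_mul_eq_one_left h4

lemma M_rowsum {W : Type*} [Fintype W] [DecidableEq W] (H : SimpleGraph W) (v : W) (r : ℕ)
    (hreg : IsReg (delVert H v) r) (x : ℝ) (w : {w : W // w ≠ v}) :
    ∑ w', (x • (1 : Matrix {w : W // w ≠ v} {w : W // w ≠ v} ℝ)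
      - adjMat ℝ (delVert H v)) w w' = x - r := by
  simp only [Matrix.sub_apply]
  rw [Finset.sum_sub_distrib]
  have h1 : ∑ w', (x • (1 : Matrix {w : W // w ≠ v} {w : W // w ≠ v} ℝ)) w w' = x := by
    simp [Matrix.smul_apply, Matrix.one_apply, mul_ite, Finset.sum_ite_eq]
  rw [h1, adj_rowsum, hreg w]

lemma aSpec_eq {V : Type*} [Fintype V] [DecidableEq V] (G : SimpleGraph V) :
    aSpec G = (adjMat ℝ G).charpoly.roots := by
  unfold aSpec
  congr!

end CospectralAux
section SchurAux

open Polynomial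

lemma det_whole {W : Type*} [Fintype W] [DecidableEq W] (H : SimpleGraph W) (v : W) (r : ℕ)
    (hdeg : ∀ w : W, w ≠ v → H.Adj v w) (hreg : IsReg (delVert H v) r) (x : ℝ)
    (hxr : x ≠ (r : ℝ))
    (hdet : IsUnit (x • (1 : Matrix {w : W // w ≠ v} {w : W // w ≠ v} ℝ)
      - adjMat ℝ (delVert H v)).det) :
    (x • (1 : Matrix W W ℝ) - adjMat ℝ H).det
      = (x • (1 : Matrix {w : W // w ≠ v} {w : W // w ≠ v} ℝ) - adjMat ℝ (delVert H v)).det *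
        (x - (Fintype.card {w : W // w ≠ v} : ℝ) * (x - (r : ℝ))⁻¹) := by
  set S := {w : W // w ≠ v}
  set M : Matrix S S ℝ := x • (1 : Matrix S S ℝ) - adjMat ℝ (delVert H v) with hMdef
  letI : Invertible M := M.invertibleOfIsUnitDet hdet
  haveI : Unique {w : W // w = v} := ⟨⟨⟨v, rfl⟩⟩, fun a => Subtype.ext a.2⟩
  let e : {w : W // w = v} ⊕ {w : W // ¬ w = v} ≃ W := Equiv.sumCompl (· = v)
  have hsub : (x • (1 : Matrix W W ℝ) - adjMat ℝ H).submatrix e e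
      = Matrix.fromBlocks (Matrix.of fun _ _ => x) (Matrix.of fun _ _ => (-1 : ℝ))
          (Matrix.of fun _ _ => (-1 : ℝ)) M := by
    ext i j
    rcases i with i | i <;> rcases j with j | j
    · have hi : i.1 = v := i.2
      have hj : j.1 = v := j.2
      simp [Matrix.submatrix_apply, e, Matrix.sub_apply, Matrix.smul_apply, Matrix.one_apply,
        adjMat, hi, hj]
    · have hi : i.1 = v := i.2
      have hadj : H.Adj i.1 j.1 := by rw [hi]; exact hdeg j.1 j.2
      have hne : i.1 ≠ j.1 := fun h => j.2 (by rw [← h, hi])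
      simp [Matrix.submatrix_apply, e, Matrix.sub_apply, Matrix.smul_apply, Matrix.one_apply,
        adjMat, hadj, hne]
    · have hj : j.1 = v := j.2
      have hadj : H.Adj i.1 j.1 := H.adj_symm (by rw [hj]; exact hdeg i.1 i.2)
      have hne : i.1 ≠ j.1 := fun h => i.2 (by rw [h, hj])
      simp [Matrix.submatrix_apply, e, Matrix.sub_apply, Matrix.smul_apply, Matrix.one_apply,
        adjMat, hadj, hne]
    · have : (i : W) = j ↔ i = j := Subtype.val_inj
      simp [Matrix.submatrix_apply, e, hMdef, Matrix.sub_apply, Matrix.smul_apply,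
        Matrix.one_apply, adjMat, delVert, this]
  have hrowM : ∀ w : S, ∑ w', M w w' = x - (r : ℝ) := fun w => M_rowsum H v r hreg x w
  have hrowE : ∀ i : S, ∑ j, (⅟M) i j = (x - (r : ℝ))⁻¹ :=
    inv_rowsum M (⅟M) (x - (r : ℝ)) (sub_ne_zero.mpr hxr) (invOf_mul_self M) hrowM
  rw [← Matrix.det_submatrix_equiv_self e, hsub, Matrix.det_fromBlocks₂₂]
  congr 1
  rw [Matrix.det_unique]
  have hBEC : ((Matrix.of fun (_ : {w : W // w = v}) (_ : S) => (-1 : ℝ)) * ⅟M *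
      Matrix.of fun (_ : S) (_ : {w : W // w = v}) => (-1 : ℝ))
      (default : {w : W // w = v}) default = (Fintype.card S : ℝ) * (x - (r : ℝ))⁻¹ := by
    simp only [Matrix.mul_apply, Matrix.of_apply, neg_one_mul, mul_neg_one, neg_neg,
      Finset.sum_neg_distrib, neg_neg]
    rw [Finset.sum_comm]
    simp [← Matrix.invOf_eq_nonsing_inv, hrowE, Finset.sum_const, Finset.card_univ,
      nsmul_eq_mul]
  simp only [Matrix.sub_apply, Matrix.of_apply, hBEC]
  exact congrArg (fun n : ℕ => x - (n : ℝ) * (x - (r : ℝ))⁻¹) (Fintype.card_congr' rfl)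
end SchurAux
section PocketAux

open Polynomial

lemma kron_mul {k : ℕ} {S : Type*} [Fintype S] [DecidableEq S] (A B : Matrix S S ℝ) :
    (Matrix.of fun (p q : Fin k × S) => if p.1 = q.1 then A p.2 q.2 else 0) *
      (Matrix.of fun (p q : Fin k × S) => if p.1 = q.1 then B p.2 q.2 else 0) =
      Matrix.of fun (p q : Fin k × S) => if p.1 = q.1 then (A * B) p.2 q.2 else 0 := by
  ext ⟨i, w⟩ ⟨j, w'⟩
  simp only [Matrix.mul_apply, Matrix.of_apply, Fintype.sum_prod_type]
  have hterm : ∀ j' : Fin k, ∑ w'' : S,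
      (if i = j' then A w w'' else 0) * (if j' = j then B w'' w' else 0)
      = if i = j' then (if i = j then ∑ w'' : S, A w w'' * B w'' w' else 0) else 0 := by
    intro j'
    by_cases h1 : i = j'
    · subst h1
      by_cases h2 : i = j <;> simp [h2]
    · simp [h1]
  simp_rw [hterm]
  simp [Finset.sum_ite_eq]

lemma kron_one {k : ℕ} {S : Type*} [Fintype S] [DecidableEq S] :
    (Matrix.of fun (p q : Fin k × S) => if p.1 = q.1 then (1 : Matrix S S ℝ) p.2 q.2 else 0)
      = 1 := by
  ext ⟨i, w⟩ ⟨j, w'⟩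
  by_cases h1 : i = j <;> by_cases h2 : w = w' <;>
    simp [Matrix.one_apply, Prod.ext_iff, h1, h2]

lemma det_pocket {V W : Type*} [Fintype V] [DecidableEq V] [Fintype W] [DecidableEq W]
    (F : SimpleGraph V) (H : SimpleGraph W) (v : W) (r k : ℕ) (f : Fin k ↪ V)
    (hdeg : ∀ w : W, w ≠ v → H.Adj v w) (hreg : IsReg (delVert H v) r) (x : ℝ)
    (hxr : x ≠ (r : ℝ))
    (hdet : IsUnit (x • (1 : Matrix {w : W // w ≠ v} {w : W // w ≠ v} ℝ)
      - adjMat ℝ (delVert H v)).det) :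
    (x • (1 : Matrix (V ⊕ (Fin k × {w : W // w ≠ v})) (V ⊕ (Fin k × {w : W // w ≠ v})) ℝ)
      - adjMat ℝ (pocketGraph F H v f)).det
      = (x • (1 : Matrix {w : W // w ≠ v} {w : W // w ≠ v} ℝ)
          - adjMat ℝ (delVert H v)).det ^ k *
        (x • (1 : Matrix V V ℝ) - adjMat ℝ F
          - ((Fintype.card {w : W // w ≠ v} : ℝ) * (x - (r : ℝ))⁻¹) •
            Matrix.of (fun a b => ∑ j, if a = f j ∧ b = f j then (1 : ℝ) else 0)).det := by
  set S := {w : W // w ≠ v}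
  set M : Matrix S S ℝ := x • (1 : Matrix S S ℝ) - adjMat ℝ (delVert H v) with hMdef
  letI : Invertible M := M.invertibleOfIsUnitDet hdet
  set D : Matrix (Fin k × S) (Fin k × S) ℝ :=
    Matrix.of fun p q => if p.1 = q.1 then M p.2 q.2 else 0 with hDdef
  set E : Matrix (Fin k × S) (Fin k × S) ℝ :=
    Matrix.of fun p q => if p.1 = q.1 then (⅟M) p.2 q.2 else 0 with hEdef
  have hDE : D * E = 1 := by rw [hDdef, hEdef, kron_mul, mul_invOf_self, kron_one]
  have hED : E * D = 1 := by rw [hDdef, hEdef, kron_mul, invOf_mul_self, kron_one]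
  letI iD : Invertible D := ⟨E, hED, hDE⟩
  set NA : Matrix V V ℝ := x • (1 : Matrix V V ℝ) - adjMat ℝ F with hNAdef
  set NB : Matrix V (Fin k × S) ℝ :=
    Matrix.of fun a q => if a = f q.1 then (-1 : ℝ) else 0 with hNBdef
  set NC : Matrix (Fin k × S) V ℝ :=
    Matrix.of fun p a => if a = f p.1 then (-1 : ℝ) else 0 with hNCdef
  have hN : x • (1 : Matrix (V ⊕ (Fin k × S)) (V ⊕ (Fin k × S)) ℝ)
      - adjMat ℝ (pocketGraph F H v f) = Matrix.fromBlocks NA NB NC D := by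
    ext i j
    rcases i with a | ⟨i, w⟩ <;> rcases j with b | ⟨j, w'⟩
    · simp [Matrix.sub_apply, Matrix.smul_apply, Matrix.one_apply, adjMat, pocketGraph,
        hNAdef]
      exact if_congr Iff.rfl rfl rfl
    · have hadj : H.Adj v w'.1 := hdeg w'.1 w'.2
      simp [Matrix.sub_apply, Matrix.smul_apply, Matrix.one_apply, adjMat, pocketGraph,
        hNBdef, hadj]
      split_ifs <;> norm_num
    · have hadj : H.Adj v w.1 := hdeg w.1 w.2
      simp [Matrix.sub_apply, Matrix.smul_apply, Matrix.one_apply, adjMat, pocketGraph,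
        hNCdef, hadj]
      split_ifs <;> norm_num
    · have hval : (w : W) = w' ↔ w = w' := Subtype.val_inj
      by_cases h1 : i = j <;>
        simp [Matrix.sub_apply, Matrix.smul_apply, Matrix.one_apply, adjMat, pocketGraph,
          hDdef, hMdef, delVert, Prod.ext_iff, h1, hval]
  have hrowM : ∀ w : S, ∑ w', M w w' = x - (r : ℝ) := fun w => M_rowsum H v r hreg x w
  have hrowE : ∀ i : S, ∑ j, (⅟M) i j = (x - (r : ℝ))⁻¹ :=
    inv_rowsum M (⅟M) (x - (r : ℝ)) (sub_ne_zero.mpr hxr) (invOf_mul_self M) hrowM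
  have htot : ∑ w' : S, ∑ w : S, (⅟M) w w' = (Fintype.card S : ℝ) * (x - (r : ℝ))⁻¹ := by
    rw [Finset.sum_comm]
    simp [← Matrix.invOf_eq_nonsing_inv, hrowE, Finset.sum_const, Finset.card_univ,
      nsmul_eq_mul]
  have hDdet : D.det = M.det ^ k := by
    have hDblock : D = (Matrix.blockDiagonal fun _ : Fin k => M).submatrix
        (Equiv.prodComm (Fin k) S) (Equiv.prodComm (Fin k) S) := by
      ext ⟨i, w⟩ ⟨j, w'⟩
      simp [Matrix.blockDiagonal_apply, hDdef, Matrix.submatrix_apply]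
    rw [hDblock, Matrix.det_submatrix_equiv_self, Matrix.det_blockDiagonal]
    simp
  have hiDE : (⅟D : Matrix (Fin k × S) (Fin k × S) ℝ) = E := rfl
  have hBE : NB * E = Matrix.of fun a (q : Fin k × S) =>
      if a = f q.1 then -(∑ w : S, (⅟M) w q.2) else 0 := by
    ext a ⟨j, w'⟩
    simp only [Matrix.mul_apply, Matrix.of_apply, Fintype.sum_prod_type, hNBdef, hEdef]
    have hterm : ∀ i : Fin k, ∑ w : S,
        (if a = f i then (-1 : ℝ) else 0) * (if i = j then (⅟M) w w' else 0)
        = if i = j then (if a = f j then -(∑ w : S, (⅟M) w w') else 0) else 0 := by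
      intro i
      by_cases h1 : i = j
      · subst h1
        by_cases h2 : a = f i <;> simp [h2, Finset.sum_neg_distrib]
      · simp [h1]
    simp_rw [hterm]
    simp [Finset.sum_ite_eq']
  have hBEC : NB * ⅟D * NC = Matrix.of fun a b =>
      ((Fintype.card S : ℝ) * (x - (r : ℝ))⁻¹) *
        ∑ j, if a = f j ∧ b = f j then (1 : ℝ) else 0 := by
    rw [hiDE, hBE]
    ext a b
    simp only [Matrix.mul_apply, Matrix.of_apply, Fintype.sum_prod_type, hNCdef]
    have hterm : ∀ j : Fin k, ∑ w' : S,
        (if a = f j then -(∑ w : S, (⅟M) w w') else 0) * (if b = f j then (-1 : ℝ) else 0)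
        = if a = f j ∧ b = f j then ((Fintype.card S : ℝ) * (x - (r : ℝ))⁻¹) else 0 := by
      intro j
      by_cases h1 : a = f j <;> by_cases h2 : b = f j <;>
        simp [← Matrix.invOf_eq_nonsing_inv, h1, h2, Finset.sum_neg_distrib, htot]
    simp_rw [hterm]
    rw [Finset.mul_sum]
    simp [mul_ite]
  have hmat : NA - Matrix.of (fun a b => ((Fintype.card S : ℝ) * (x - (r : ℝ))⁻¹) *
        ∑ j, if a = f j ∧ b = f j then (1 : ℝ) else 0)
      = x • (1 : Matrix V V ℝ) - adjMat ℝ F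
        - ((Fintype.card S : ℝ) * (x - (r : ℝ))⁻¹) •
          Matrix.of (fun a b => ∑ j, if a = f j ∧ b = f j then (1 : ℝ) else 0) := by
    ext a b
    simp [hNAdef, Matrix.sub_apply, Matrix.smul_apply]
  rw [hN, Matrix.det_fromBlocks₂₂, hDdet, hBEC, hmat]

end PocketAux
/-- Corollary 3.3. -/
theorem adj_cospectral_pocketGraph
    {V W₁ W₂ : Type*} [Fintype V] [DecidableEq V] [Fintype W₁] [DecidableEq W₁]
    [Fintype W₂] [DecidableEq W₂]
    (m k r₁ : ℕ) (hmu : Fintype.card W₁ = m) (hmv : Fintype.card W₂ = m)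
    (hm2 : 2 ≤ m) (hr₁ : 1 ≤ r₁)
    (F : SimpleGraph V) (Hu : SimpleGraph W₁) (Hv : SimpleGraph W₂) (u : W₁) (v : W₂)
    (hdegu : ∀ w : W₁, w ≠ u → Hu.Adj u w) (hdegv : ∀ w : W₂, w ≠ v → Hv.Adj v w)
    (hregu : IsReg (delVert Hu u) r₁) (hregv : IsReg (delVert Hv v) r₁)
    (f : Fin k ↪ V)
    (hcos : aSpec Hu = aSpec Hv) :
    aSpec (pocketGraph F Hu u f) = aSpec (pocketGraph F Hv v f) := by
  classical
  rw [aSpec_eq, aSpec_eq] at hcos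
  rw [aSpec_eq, aSpec_eq]
  open Polynomial in
  have hpolyH : (adjMat ℝ Hu).charpoly = (adjMat ℝ Hv).charpoly := by
    rw [charpoly_eq_prod_of_symm _ (adjMat_isHermitian Hu),
      charpoly_eq_prod_of_symm _ (adjMat_isHermitian Hv)]
    rw [hcos]
  have hm1 : 1 ≤ m := le_trans (by norm_num) hm2
  have hmR : (2 : ℝ) ≤ (m : ℝ) := by exact_mod_cast hm2
  have hcardu : ((Fintype.card {w : W₁ // w ≠ u} : ℕ) : ℝ) = (m : ℝ) - 1 := by
    have h1 : Fintype.card {w : W₁ // w ≠ u} = Fintype.card W₁ - 1 := by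
      have h := Fintype.card_subtype_compl (fun w : W₁ => w = u)
      rw [Fintype.card_subtype_eq] at h
      convert h using 2
    rw [h1, hmu, Nat.cast_sub hm1, Nat.cast_one]
  have hcardv : ((Fintype.card {w : W₂ // w ≠ v} : ℕ) : ℝ) = (m : ℝ) - 1 := by
    have h1 : Fintype.card {w : W₂ // w ≠ v} = Fintype.card W₂ - 1 := by
      have h := Fintype.card_subtype_compl (fun w : W₂ => w = v)
      rw [Fintype.card_subtype_eq] at h
      convert h using 2
    rw [h1, hmv, Nat.cast_sub hm1, Nat.cast_one]
  set qq : Polynomial ℝ :=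
    Polynomial.X * (Polynomial.X - Polynomial.C (r₁ : ℝ)) - Polynomial.C ((m : ℝ) - 1)
    with hqqdef
  have hqq0 : qq ≠ 0 := by
    intro h
    have h0 := congrArg (Polynomial.eval 0) h
    simp [hqqdef] at h0
    linarith
  have hpu0 : (adjMat ℝ (delVert Hu u)).charpoly ≠ 0 := (Matrix.charpoly_monic _).ne_zero
  have hpv0 : (adjMat ℝ (delVert Hv v)).charpoly ≠ 0 := (Matrix.charpoly_monic _).ne_zero
  set bad : Set ℝ :=
    ({x | ((adjMat ℝ (delVert Hu u)).charpoly).IsRoot x}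
      ∪ {x | ((adjMat ℝ (delVert Hv v)).charpoly).IsRoot x}
      ∪ {x | qq.IsRoot x}) ∪ {(r₁ : ℝ)} with hbaddef
  have hbadfin : bad.Finite := by
    refine Set.Finite.union (Set.Finite.union (Set.Finite.union ?_ ?_) ?_)
      (Set.finite_singleton _)
    · exact Polynomial.finite_setOf_isRoot hpu0
    · exact Polynomial.finite_setOf_isRoot hpv0
    · exact Polynomial.finite_setOf_isRoot hqq0
  have key : ∀ x : ℝ, x ∉ bad →
      Polynomial.eval x (adjMat ℝ (pocketGraph F Hu u f)).charpoly
        = Polynomial.eval x (adjMat ℝ (pocketGraph F Hv v f)).charpoly := by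
    intro x hx
    simp only [hbaddef, Set.mem_union, Set.mem_setOf_eq, Set.mem_singleton_iff, not_or] at hx
    obtain ⟨⟨⟨hxu, hxv⟩, hxq⟩, hxr⟩ := hx
    have hxr' : x ≠ (r₁ : ℝ) := hxr
    have hsubr : (x - (r₁ : ℝ)) ≠ 0 := sub_ne_zero.mpr hxr'
    have hdetu : IsUnit (x • (1 : Matrix {w : W₁ // w ≠ u} {w : W₁ // w ≠ u} ℝ)
        - adjMat ℝ (delVert Hu u)).det := by
      rw [← myEvalCharpoly]
      exact isUnit_iff_ne_zero.mpr hxu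
    have hdetv : IsUnit (x • (1 : Matrix {w : W₂ // w ≠ v} {w : W₂ // w ≠ v} ℝ)
        - adjMat ℝ (delVert Hv v)).det := by
      rw [← myEvalCharpoly]
      exact isUnit_iff_ne_zero.mpr hxv
    have hwu := det_whole Hu u r₁ hdegu hregu x hxr' hdetu
    have hwv := det_whole Hv v r₁ hdegv hregv x hxr' hdetv
    have hev : (x • (1 : Matrix W₁ W₁ ℝ) - adjMat ℝ Hu).det
        = (x • (1 : Matrix W₂ W₂ ℝ) - adjMat ℝ Hv).det := by
      rw [← myEvalCharpoly, ← myEvalCharpoly, hpolyH]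
    rw [hwu, hwv, hcardu, hcardv] at hev
    have ht : x - ((m : ℝ) - 1) * (x - (r₁ : ℝ))⁻¹ ≠ 0 := by
      intro h0
      apply hxq
      have hx0 : x = ((m : ℝ) - 1) * (x - (r₁ : ℝ))⁻¹ := sub_eq_zero.mp h0
      have hmul : x * (x - (r₁ : ℝ)) = (m : ℝ) - 1 := by
        calc x * (x - (r₁ : ℝ)) = ((m : ℝ) - 1) * (x - (r₁ : ℝ))⁻¹ * (x - (r₁ : ℝ)) := by
              rw [← hx0]
          _ = (m : ℝ) - 1 := by field_simp
      show qq.eval x = 0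
      simp [hqqdef, hmul]
    have hMM := mul_right_cancel₀ ht hev
    rw [myEvalCharpoly, myEvalCharpoly,
      det_pocket F Hu u r₁ k f hdegu hregu x hxr' hdetu,
      det_pocket F Hv v r₁ k f hdegv hregv x hxr' hdetv,
      hcardu, hcardv, hMM]
  have hinf : {x : ℝ | Polynomial.eval x (adjMat ℝ (pocketGraph F Hu u f)).charpoly
      = Polynomial.eval x (adjMat ℝ (pocketGraph F Hv v f)).charpoly}.Infinite :=
    (hbadfin.infinite_compl).mono (fun x hx => key x hx)
  have hfinal : (adjMat ℝ (pocketGraph F Hu u f)).charpoly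
      = (adjMat ℝ (pocketGraph F Hv v f)).charpoly :=
    Polynomial.eq_of_infinite_eval_eq _ _ hinf
  rw [hfinal]
end

section
/- Let G = G[F,V_k,H_v] be the graph with k pockets, where |V_k| = k. Then for every complex number x such that x − 1 is not an eigenvalue of Q(H_1), the Q-characteristic polynomial of G satisfies f_{Q(G)}(x) = (f_{Q(H_1)}(x−1))^k · det(x I_n − M), where M = Q(F) + (m − 1 + Γ_{Q(H_1)}(x−1)) · diag(I_k, 0) and diag(I_k, 0) is the n×n block-diagonal matrix with respect to an ordering of V(F) listing v_1,…,v_k first. -/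
open Matrix BigOperators
open scoped Classical

private lemma cast_card_filter_aux {α : Type*} [Fintype α] (p : α → Prop) :
    (((Finset.univ.filter p).card : ℕ) : ℂ) = ∑ a : α, if p a then (1:ℂ) else 0 := by
  rw [Finset.card_filter, Nat.cast_sum]
  exact Finset.sum_congr rfl fun b _ => by by_cases h : p b <;> simp [h]

/-- Proposition 3.5. -/
theorem signlessLap_charpoly_pocketGraph
    {V W : Type*} [Fintype V] [DecidableEq V] [Fintype W] [DecidableEq W]
    (n m k : ℕ) (hn : Fintype.card V = n) (hm : Fintype.card W = m) (hm2 : 2 ≤ m)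
    (F : SimpleGraph V) (H : SimpleGraph W) (v : W)
    (hdeg : ∀ w : W, w ≠ v → H.Adj v w)
    (f : Fin k ↪ V)
    (x : ℂ)
    (hx : ((x - 1) • (1 : Matrix {w : W // w ≠ v} {w : W // w ≠ v} ℂ)
            - qMat ℂ (delVert H v)).det ≠ 0) :
    (x • (1 : Matrix (V ⊕ (Fin k × {w : W // w ≠ v})) (V ⊕ (Fin k × {w : W // w ≠ v})) ℂ)
        - qMat ℂ (pocketGraph F H v f)).det
      = (((x - 1) • (1 : Matrix {w : W // w ≠ v} {w : W // w ≠ v} ℂ)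
            - qMat ℂ (delVert H v)).det) ^ k
        * (x • (1 : Matrix V V ℂ)
            - (qMat ℂ F
                + (((m : ℂ) - 1) + coronal (qMat ℂ (delVert H v)) (x - 1))
                    • embedMatrix (f : Fin k → V) (1 : Matrix (Fin k) (Fin k) ℂ))).det := by
  classical
  have h1m : (1:ℕ) ≤ m := le_trans one_le_two hm2
  set S := {w : W // w ≠ v} with hSdef
  set N : Matrix S S ℂ := (x - 1) • (1 : Matrix S S ℂ) - qMat ℂ (delVert H v) with hNdef
  have hNunit : IsUnit N.det := isUnit_iff_ne_zero.mpr hx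
  have hNinv : N * N⁻¹ = 1 := Matrix.mul_nonsing_inv N hNunit
  set G := pocketGraph F H v f with hGdef
  set Γ : ℂ := coronal (qMat ℂ (delVert H v)) (x - 1) with hGamdef
  have hGam : Γ = ∑ i : S, ∑ j : S, N⁻¹ i j := rfl
  have adjS : ∀ (w : S), H.Adj v w.1 := fun w => hdeg w.1 w.2
  -- cardinality of S
  have hcardS : (Fintype.card S : ℂ) = (m : ℂ) - 1 := by
    have h2 : Fintype.card S = m - 1 := by
      rw [← hm]
      simp [hSdef, Fintype.card_subtype_compl]
    rw [h2, Nat.cast_sub h1m, Nat.cast_one]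
  -- entries of the embedded identity matrix
  have hembed : ∀ a b : V, embedMatrix (f : Fin k → V) (1 : Matrix (Fin k) (Fin k) ℂ) a b
      = ∑ p : Fin k, if a = f p ∧ b = f p then (1:ℂ) else 0 := by
    intro a b
    rw [embedMatrix]
    simp only [Matrix.of_apply, Matrix.one_apply]
    refine Finset.sum_congr rfl fun p _ => ?_
    rw [Finset.sum_eq_single p]
    · by_cases h : a = f p ∧ b = f p <;> simp [h]
    · intro q _ hq
      by_cases h : a = f p ∧ b = f q
      · simp [h, Ne.symm hq]
      · simp [h]
    · simp
  have hembed0 : ∀ a b : V, a ≠ b →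
      embedMatrix (f : Fin k → V) (1 : Matrix (Fin k) (Fin k) ℂ) a b = 0 := by
    intro a b hab
    rw [hembed]
    refine Finset.sum_eq_zero fun p _ => ?_
    have : ¬ (a = f p ∧ b = f p) := by
      rintro ⟨h1, h2⟩; exact hab (h1.trans h2.symm)
    simp [this]
  -- adjacency unfolding
  have adj11 : ∀ (a b : V), G.Adj (Sum.inl a) (Sum.inl b) ↔ F.Adj a b := fun _ _ => Iff.rfl
  have adj12 : ∀ (a : V) (p : Fin k × S), G.Adj (Sum.inl a) (Sum.inr p)
      ↔ (a = f p.1 ∧ H.Adj v p.2.1) := fun _ _ => Iff.rfl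
  have adj21 : ∀ (p : Fin k × S) (a : V), G.Adj (Sum.inr p) (Sum.inl a)
      ↔ (a = f p.1 ∧ H.Adj v p.2.1) := fun _ _ => Iff.rfl
  have adj22 : ∀ (p q : Fin k × S), G.Adj (Sum.inr p) (Sum.inr q)
      ↔ (p.1 = q.1 ∧ H.Adj p.2.1 q.2.1) := fun _ _ => Iff.rfl
  have adjH1 : ∀ (w u : S), (delVert H v).Adj w u ↔ H.Adj w.1 u.1 := fun _ _ => Iff.rfl
  -- degree computations
  have deg_inl : ∀ a : V, (gdeg G (Sum.inl a) : ℂ)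
      = (gdeg F a : ℂ) + ((m:ℂ) - 1) * ∑ p : Fin k, (if a = f p then (1:ℂ) else 0) := by
    intro a
    rw [gdeg, gdeg]
    simp only [cast_card_filter_aux]
    rw [Fintype.sum_sum_type]
    have e1 : (∑ b : V, if G.Adj (Sum.inl a) (Sum.inl b) then (1:ℂ) else 0)
        = ∑ b : V, if F.Adj a b then (1:ℂ) else 0 :=
      Finset.sum_congr rfl fun b _ => by simp only [adj11]
    have e2 : (∑ p : Fin k × S, if G.Adj (Sum.inl a) (Sum.inr p) then (1:ℂ) else 0)
        = ∑ p : Fin k × S, if a = f p.1 then (1:ℂ) else 0 :=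
      Finset.sum_congr rfl fun p _ => by simp only [adj12, adjS p.2, and_true]
    rw [e2, Fintype.sum_prod_type, ← hcardS]
    have e3 : (∑ i : Fin k, ∑ _u : S, if a = f i then (1:ℂ) else 0)
        = (Fintype.card S : ℂ) * ∑ p : Fin k, if a = f p then (1:ℂ) else 0 := by
      rw [Finset.mul_sum]
      exact Finset.sum_congr rfl fun i _ => by
        rw [Finset.sum_const, nsmul_eq_mul, Finset.card_univ]
    rw [e3]
    congr 1
  have deg_inr : ∀ (p : Fin k × S), (gdeg G (Sum.inr p) : ℂ)
      = 1 + (gdeg (delVert H v) p.2 : ℂ) := by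
    intro p
    rw [gdeg, gdeg]
    simp only [cast_card_filter_aux]
    rw [Fintype.sum_sum_type]
    congr 1
    · rw [show (∑ b : V, if G.Adj (Sum.inr p) (Sum.inl b) then (1:ℂ) else 0)
          = ∑ b : V, if b = f p.1 then (1:ℂ) else 0 from
        Finset.sum_congr rfl fun b _ => by simp only [adj21, adjS p.2, and_true]]
      simp
    · rw [show (∑ q : Fin k × S, if G.Adj (Sum.inr p) (Sum.inr q) then (1:ℂ) else 0)
          = ∑ q : Fin k × S, if p.1 = q.1 then
              (if (delVert H v).Adj p.2 q.2 then (1:ℂ) else 0) else 0 from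
        Finset.sum_congr rfl fun q _ => by
          simp only [adj22, ← adjH1, ite_and]]
      rw [Fintype.sum_prod_type]
      have hpull : ∀ j : Fin k,
          (∑ u : S, if p.1 = j then (if (delVert H v).Adj p.2 u then (1:ℂ) else 0) else 0)
          = if p.1 = j then (∑ u : S, if (delVert H v).Adj p.2 u then (1:ℂ) else 0) else 0 := by
        intro j; by_cases h : p.1 = j <;> simp [h]
      simp only [hpull]
      rw [Finset.sum_ite_eq, if_pos (Finset.mem_univ _)]
  -- the blocks
  set A : Matrix V V ℂ := x • 1 - qMat ℂ F
      - ((m:ℂ) - 1) • embedMatrix (f : Fin k → V) (1 : Matrix (Fin k) (Fin k) ℂ) with hA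
  set Bm : Matrix V (Fin k × S) ℂ :=
      Matrix.of (fun a p => if a = f p.1 then (-1:ℂ) else 0) with hB
  set Cm : Matrix (Fin k × S) V ℂ :=
      Matrix.of (fun p a => if a = f p.1 then (-1:ℂ) else 0) with hC
  set D : Matrix (Fin k × S) (Fin k × S) ℂ :=
      Matrix.of (fun p q => if p.1 = q.1 then N p.2 q.2 else 0) with hD
  have hNentry : ∀ w u : S, N w u
      = (x - 1) * (if w = u then 1 else 0)
        - ((if w = u then (gdeg (delVert H v) w : ℂ) else 0)
            + (if H.Adj w.1 u.1 then (1:ℂ) else 0)) := by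
    intro w u
    rw [hNdef]
    simp only [Matrix.sub_apply, Matrix.smul_apply, Matrix.one_apply, qMat,
      Matrix.add_apply, Matrix.diagonal_apply, adjMat, Matrix.of_apply, smul_eq_mul]
    simp only [adjH1]
    congr!
  have hblocks : x • (1 : Matrix (V ⊕ (Fin k × S)) (V ⊕ (Fin k × S)) ℂ) - qMat ℂ G
      = Matrix.fromBlocks A Bm Cm D := by
    ext i j
    rcases i with a | p <;> rcases j with b | q
    · -- inl inl
      simp only [Matrix.sub_apply, Matrix.smul_apply, Matrix.one_apply, qMat,
        Matrix.add_apply, Matrix.diagonal_apply, adjMat, Matrix.of_apply, smul_eq_mul,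
        Matrix.fromBlocks_apply₁₁, hA, Sum.inl.injEq]
      simp only [adj11]
      by_cases hab : a = b
      · subst hab
        simp only [if_pos rfl, deg_inl a, hembed a a, if_neg (F.loopless.irrefl a)]
        simp only [and_self, if_true, if_false, eq_self_iff_true]
        ring
      · simp only [if_neg hab, hembed0 a b hab]
        ring
    · -- inl inr
      simp only [Matrix.sub_apply, Matrix.smul_apply, Matrix.one_apply, qMat,
        Matrix.add_apply, Matrix.diagonal_apply, adjMat, Matrix.of_apply, smul_eq_mul,
        Matrix.fromBlocks_apply₁₂, hB, reduceCtorEq, if_neg (Sum.inl_ne_inr)]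
      simp only [adj12, adjS q.2, and_true]
      by_cases h : a = f q.1 <;> simp [h]
    · -- inr inl
      simp only [Matrix.sub_apply, Matrix.smul_apply, Matrix.one_apply, qMat,
        Matrix.add_apply, Matrix.diagonal_apply, adjMat, Matrix.of_apply, smul_eq_mul,
        Matrix.fromBlocks_apply₂₁, hC, reduceCtorEq, if_neg (Sum.inr_ne_inl)]
      simp only [adj21, adjS p.2, and_true]
      by_cases h : b = f p.1 <;> simp [h]
    · -- inr inr
      simp only [Matrix.sub_apply, Matrix.smul_apply, Matrix.one_apply, qMat,
        Matrix.add_apply, Matrix.diagonal_apply, adjMat, Matrix.of_apply, smul_eq_mul,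
        Matrix.fromBlocks_apply₂₂, hD, Sum.inr.injEq]
      simp only [adj22]
      rw [hNentry p.2 q.2]
      by_cases h1 : p.1 = q.1
      · by_cases h2 : p.2 = q.2
        · have hpq : p = q := Prod.ext h1 h2
          have hloop : ¬ H.Adj p.2.1 q.2.1 := by rw [← h2]; exact H.loopless.irrefl _
          have hno : ¬ (p.1 = q.1 ∧ H.Adj p.2.1 q.2.1) := fun hc => hloop hc.2
          simp only [if_pos hpq, if_pos h1, if_pos h2, deg_inr p,
            if_neg hno, if_neg hloop]
          ring
        · have hpq : p ≠ q := fun hc => h2 (by rw [hc])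
          have hand : (p.1 = q.1 ∧ H.Adj p.2.1 q.2.1) ↔ H.Adj p.2.1 q.2.1 := and_iff_right h1
          simp only [if_neg hpq, if_pos h1, if_neg h2, hand]
          ring
      · have hpq : p ≠ q := fun hc => h1 (by rw [hc])
        have : ¬ (p.1 = q.1 ∧ H.Adj p.2.1 q.2.1) := fun hc => h1 hc.1
        simp [hpq, h1, this]
  -- determinant of D
  have hDdet : D.det = N.det ^ k := by
    have hDeq : D = (Matrix.blockDiagonal (fun _ : Fin k => N)).submatrix
        (Equiv.prodComm (Fin k) S) (Equiv.prodComm (Fin k) S) := by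
      ext p q
      simp [hD, Matrix.blockDiagonal_apply, Matrix.submatrix_apply, Equiv.prodComm_apply,
        Prod.swap]
    rw [hDeq, Matrix.det_submatrix_equiv_self, Matrix.det_blockDiagonal]
    simp
  have hDunit : IsUnit D.det := by rw [hDdet]; exact hNunit.pow k
  have hDinvertible : Invertible D := D.invertibleOfIsUnitDet hDunit
  -- inverse of D
  set E : Matrix (Fin k × S) (Fin k × S) ℂ :=
      Matrix.of (fun p q => if p.1 = q.1 then N⁻¹ p.2 q.2 else 0) with hE
  have hDE : D * E = 1 := by
    ext p q
    simp only [Matrix.mul_apply, hD, hE, Matrix.of_apply]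
    rw [Fintype.sum_prod_type]
    have hterm : ∀ (j : Fin k) (u : S),
        (if p.1 = j then N p.2 u else 0) * (if j = q.1 then N⁻¹ u q.2 else 0)
        = if p.1 = j then (if p.1 = q.1 then N p.2 u * N⁻¹ u q.2 else 0) else 0 := by
      intro j u
      by_cases h1 : p.1 = j
      · subst h1; simp
      · simp [h1]
    simp only [hterm]
    have hpull : ∀ j : Fin k,
        (∑ u : S, if p.1 = j then (if p.1 = q.1 then N p.2 u * N⁻¹ u q.2 else 0) else 0)
        = if p.1 = j then (if p.1 = q.1 then ∑ u : S, N p.2 u * N⁻¹ u q.2 else 0) else 0 := by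
      intro j
      by_cases h1 : p.1 = j <;> by_cases h2 : p.1 = q.1 <;> simp [h1, h2]
    simp only [hpull]
    rw [Finset.sum_ite_eq, if_pos (Finset.mem_univ _)]
    rw [show (∑ u : S, N p.2 u * N⁻¹ u q.2) = (N * N⁻¹) p.2 q.2 from (Matrix.mul_apply).symm,
      hNinv]
    rw [Matrix.one_apply, Matrix.one_apply]
    by_cases h1 : p.1 = q.1 <;> by_cases h2 : p.2 = q.2
    · simp [h1, h2, Prod.ext_iff]
    · simp [h1, h2, Prod.ext_iff]
    · simp [h1, h2, Prod.ext_iff]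
    · simp [h1, h2, Prod.ext_iff]
  have hDinv : D⁻¹ = E := Matrix.inv_eq_right_inv hDE
  -- compute Bm * E
  have hBmE : Bm * E = Matrix.of (fun (a : V) (q : Fin k × S) =>
      if a = f q.1 then -∑ w : S, N⁻¹ w q.2 else 0) := by
    ext a q
    simp only [Matrix.mul_apply, hB, hE, Matrix.of_apply]
    rw [Fintype.sum_prod_type]
    have hterm : ∀ (j : Fin k) (w : S),
        (if a = f j then (-1:ℂ) else 0) * (if j = q.1 then N⁻¹ w q.2 else 0)
        = if q.1 = j then (if a = f j then -(N⁻¹ w q.2) else 0) else 0 := by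
      intro j w
      by_cases h1 : j = q.1
      · have h1' : q.1 = j := h1.symm
        by_cases h2 : a = f j
        · rw [if_pos h2, if_pos h1, if_pos h1', if_pos h2]; ring
        · rw [if_neg h2, zero_mul, if_pos h1', if_neg h2]
      · have h1' : ¬ q.1 = j := fun hc => h1 hc.symm
        rw [if_neg h1, mul_zero, if_neg h1']
    simp only [hterm]
    have hpull : ∀ j : Fin k,
        (∑ w : S, if q.1 = j then (if a = f j then -(N⁻¹ w q.2) else 0) else 0)
        = if q.1 = j then (if a = f j then -∑ w : S, N⁻¹ w q.2 else 0) else 0 := by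
      intro j
      by_cases h1 : q.1 = j <;> by_cases h2 : a = f j <;>
        simp [h1, h2, Finset.sum_neg_distrib]
    simp only [hpull]
    rw [Finset.sum_ite_eq, if_pos (Finset.mem_univ _)]
  -- the Schur complement correction term
  have hBEC : Bm * D⁻¹ * Cm = Γ • embedMatrix (f : Fin k → V) (1 : Matrix (Fin k) (Fin k) ℂ) := by
    rw [hDinv, hBmE]
    ext a b
    simp only [Matrix.mul_apply, hC, Matrix.of_apply, Matrix.smul_apply, smul_eq_mul]
    rw [Fintype.sum_prod_type]
    have hterm : ∀ (l : Fin k) (u : S),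
        (if a = f l then -∑ w : S, N⁻¹ w u else 0) * (if b = f l then (-1:ℂ) else 0)
        = if a = f l ∧ b = f l then ∑ w : S, N⁻¹ w u else 0 := by
      intro l u
      by_cases h1 : a = f l <;> by_cases h2 : b = f l <;> simp [h1, h2]
    simp only [hterm]
    have hpull : ∀ l : Fin k,
        (∑ u : S, if a = f l ∧ b = f l then (∑ w : S, N⁻¹ w u) else 0)
        = if a = f l ∧ b = f l then (∑ u : S, ∑ w : S, N⁻¹ w u) else 0 := by
      intro l
      by_cases h : a = f l ∧ b = f l <;> simp [h]
    simp only [hpull]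
    rw [hembed a b, Finset.mul_sum]
    refine Finset.sum_congr rfl fun l _ => ?_
    by_cases h : a = f l ∧ b = f l
    · rw [if_pos h, if_pos h, mul_one, hGam, Finset.sum_comm]
    · rw [if_neg h, if_neg h, mul_zero]
  -- assembly
  have hA' : A - Γ • embedMatrix (f : Fin k → V) (1 : Matrix (Fin k) (Fin k) ℂ)
      = x • (1 : Matrix V V ℂ)
        - (qMat ℂ F + (((m : ℂ) - 1) + Γ)
            • embedMatrix (f : Fin k → V) (1 : Matrix (Fin k) (Fin k) ℂ)) := by
    rw [hA, add_smul]
    abel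
  rw [hblocks, Matrix.det_fromBlocks₂₂, invOf_eq_nonsing_inv, hBEC, hA', hDdet]
end

section
/- Let H_u and H_v be two disjoint graphs of order m such that H_u − u and H_v − v are both r_1-regular, where m ≥ 2 and r_1 ≥ 1. If H_u and H_v have the same signless Laplacian spectrum (are Q-cospectral), then the pocket graphs G[F,V_k,H_u] and G[F,V_k,H_v] are Q-cospectral. -/
open Matrix BigOperators
open scoped Classical

open Polynomial

lemma eval_charpoly' {n : Type*} [Fintype n] [DecidableEq n] (M : Matrix n n ℝ) (x : ℝ) :
    M.charpoly.eval x = (x • (1 : Matrix n n ℝ) - M).det := by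
  rw [Matrix.charpoly, ← Polynomial.coe_evalRingHom, RingHom.map_det]
  congr 1
  ext i j
  by_cases h : i = j <;>
    simp [h, charmatrix_apply, Matrix.one_apply, Matrix.diagonal_apply, Matrix.sub_apply,
      Matrix.smul_apply]

lemma herm_charpoly {n : Type*} [Fintype n] [DecidableEq n] {M : Matrix n n ℝ}
    (hM : M.IsHermitian) :
    M.charpoly = ((Finset.univ.val.map hM.eigenvalues).map fun a => X - C a).prod := by
  apply Polynomial.funext
  intro x
  have key : (x • (1 : Matrix n n ℝ) - M).det = ∏ i, (x - hM.eigenvalues i) := by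
    have hspec : star (hM.eigenvectorUnitary : Matrix n n ℝ) * M * (hM.eigenvectorUnitary : Matrix n n ℝ)
        = Matrix.diagonal (RCLike.ofReal ∘ hM.eigenvalues) := by
      have h0 := hM.conjStarAlgAut_star_eigenvectorUnitary
      rw [Unitary.conjStarAlgAut_star_apply] at h0
      exact h0
    set U := (Matrix.IsHermitian.eigenvectorUnitary hM : Matrix n n ℝ)
    have hU : star U * U = 1 := Unitary.coe_star_mul_self _
    have h1 : star U * (x • (1 : Matrix n n ℝ) - M) * U
        = x • (1 : Matrix n n ℝ) - Matrix.diagonal (RCLike.ofReal ∘ hM.eigenvalues) := by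
      rw [← hspec]
      rw [Matrix.mul_sub, Matrix.sub_mul]
      congr 1
      rw [Matrix.mul_smul, Matrix.mul_one, Matrix.smul_mul, hU]
    have hdet : det (star U) * det U = 1 := by
      rw [← det_mul, hU, det_one]
    have := congrArg det h1
    rw [det_mul, det_mul] at this
    have h2 : det (x • (1 : Matrix n n ℝ) - M) =
        det (x • (1 : Matrix n n ℝ) - Matrix.diagonal (RCLike.ofReal ∘ hM.eigenvalues)) := by
      calc det (x • (1 : Matrix n n ℝ) - M)
          = (det (star U) * det U) * det (x • (1 : Matrix n n ℝ) - M) := by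
            rw [hdet, one_mul]
        _ = det (star U) * det (x • (1 : Matrix n n ℝ) - M) * det U := by ring
        _ = _ := this
    rw [h2]
    have : x • (1 : Matrix n n ℝ) - Matrix.diagonal (RCLike.ofReal ∘ hM.eigenvalues)
        = Matrix.diagonal (fun i => x - hM.eigenvalues i) := by
      rw [Matrix.smul_one_eq_diagonal, ← Matrix.diagonal_sub]
      congr 1
    rw [this, det_diagonal]
  rw [eval_charpoly', key]
  rw [eval_multiset_prod]
  rw [Multiset.map_map]
  rw [Finset.prod_eq_multiset_prod, Multiset.map_map]
  congr 1
  ext a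
  simp

lemma herm_charpoly_roots {n : Type*} [Fintype n] [DecidableEq n] {M : Matrix n n ℝ}
    (hM : M.IsHermitian) :
    M.charpoly = (M.charpoly.roots.map fun a => X - C a).prod := by
  conv_lhs => rw [herm_charpoly hM]
  congr 2
  rw [herm_charpoly hM, Polynomial.roots_multiset_prod_X_sub_C]

lemma schur_engine {α β : Type*} [Fintype α] [DecidableEq α] [Fintype β] [DecidableEq β]
    (A : Matrix α α ℝ) (B : Matrix α β ℝ) (C : Matrix β α ℝ) (D : Matrix β β ℝ)
    (hD : IsUnit D.det) (t : ℝ) (ht : t ≠ 0) (hDC : D * C = t • C) :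
    (Matrix.fromBlocks A B C D).det = D.det * (A - t⁻¹ • (B * C)).det := by
  have hI : Invertible D := D.invertibleOfIsUnitDet hD
  rw [Matrix.det_fromBlocks₂₂]
  congr 2
  have h : C = t • (D⁻¹ * C) := by
    have h := congrArg (fun M => D⁻¹ * M) hDC
    simp only [Matrix.mul_smul] at h
    rw [← Matrix.mul_assoc, Matrix.nonsing_inv_mul _ hD, Matrix.one_mul] at h
    exact h
  have h1 : D⁻¹ * C = t⁻¹ • C := by
    calc D⁻¹ * C = t⁻¹ • (t • (D⁻¹ * C)) := by
          rw [smul_smul, inv_mul_cancel₀ ht, one_smul]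
      _ = t⁻¹ • C := by rw [← h]
  rw [Matrix.invOf_eq_nonsing_inv, Matrix.mul_assoc, h1, Matrix.mul_smul]

lemma gdeg_real {V : Type*} [Fintype V] (G : SimpleGraph V) (x : V) :
    ((gdeg G x : ℕ) : ℝ) = ∑ y, adjMat ℝ G x y := by
  rw [gdeg, adjMat, ← Finset.sum_boole]
  rfl

lemma rowsum_reg {V : Type*} [Fintype V] {G : SimpleGraph V} {r : ℕ} (h : IsReg G r) (x : V) :
    ∑ y, adjMat ℝ G x y = (r : ℝ) := by
  rw [← gdeg_real, h x]

def sumComplEquiv {W : Type*} [DecidableEq W] (u : W) :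
    {y : W // y = u} ⊕ {y : W // y ≠ u} ≃ W where
  toFun := Sum.elim Subtype.val Subtype.val
  invFun y := if h : y = u then Sum.inl ⟨y, h⟩ else Sum.inr ⟨y, h⟩
  left_inv := by
    rintro (⟨y, rfl⟩ | ⟨y, hy⟩)
    · simp
    · simp [hy]
  right_inv := by intro y; by_cases h : y = u <;> simp [h]

@[simp] lemma sumComplEquiv_inl {W : Type*} [DecidableEq W] (u : W) (y : {y : W // y = u}) :
    sumComplEquiv u (Sum.inl y) = y.1 := rfl

@[simp] lemma sumComplEquiv_inr {W : Type*} [DecidableEq W] (u : W) (y : {y : W // y ≠ u}) :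
    sumComplEquiv u (Sum.inr y) = y.1 := rfl

instance uniqueEqSub {W : Type*} (u : W) : Unique {y : W // y = u} :=
  ⟨⟨⟨u, rfl⟩⟩, fun y => Subtype.ext y.2⟩

lemma card_iota {W : Type*} [Fintype W] [DecidableEq W] (u : W) (m : ℕ)
    (hm : Fintype.card W = m) (hm2 : 2 ≤ m) :
    ((Fintype.card {w : W // w ≠ u} : ℕ) : ℝ) = (m : ℝ) - 1 := by
  have h : Fintype.card {w : W // w ≠ u} = Fintype.card W - 1 := by
    simp [Fintype.card_subtype_compl]
  rw [h, hm]
  have : 1 ≤ m := le_trans (by norm_num) hm2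
  push_cast [this]
  ring

lemma gdeg_u_real {W : Type*} [Fintype W] [DecidableEq W] {H : SimpleGraph W} {u : W}
    (m : ℕ) (hm : Fintype.card W = m) (hm2 : 2 ≤ m)
    (hdegu : ∀ w : W, w ≠ u → H.Adj u w) :
    ((gdeg H u : ℕ) : ℝ) = (m : ℝ) - 1 := by
  rw [gdeg]
  have h1 : (Finset.univ.filter fun y => H.Adj u y) = Finset.univ.filter fun y : W => y ≠ u := by
    ext y
    simp only [Finset.mem_filter, Finset.mem_univ, true_and]
    exact ⟨fun h => (H.ne_of_adj h).symm, fun h => hdegu y h⟩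
  have h2 : (Finset.univ.filter fun y : W => y ≠ u).card = Fintype.card {w : W // w ≠ u} := by
    rw [Fintype.card_subtype]
  rw [h1, h2, card_iota u m hm hm2]

lemma gdeg_w_real {W : Type*} [Fintype W] [DecidableEq W] {H : SimpleGraph W} {u : W} {r₁ : ℕ}
    (hdegu : ∀ w : W, w ≠ u → H.Adj u w) (hreg : IsReg (delVert H u) r₁)
    (w : {w : W // w ≠ u}) :
    ((gdeg H w.1 : ℕ) : ℝ) = (r₁ : ℝ) + 1 := by
  rw [gdeg_real]
  rw [← Fintype.sum_equiv (sumComplEquiv u) (fun z => adjMat ℝ H w.1 (sumComplEquiv u z))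
    (fun y => adjMat ℝ H w.1 y) (fun z => rfl)]
  rw [Fintype.sum_sum_type]
  have h1 : ∑ y : {y : W // y = u}, adjMat ℝ H w.1 (sumComplEquiv u (Sum.inl y)) = 1 := by
    rw [Fintype.sum_unique]
    show adjMat ℝ H w.1 u = 1
    simp [adjMat, H.adj_symm (hdegu w.1 w.2)]
  have h2 : ∑ y : {y : W // y ≠ u}, adjMat ℝ H w.1 (sumComplEquiv u (Sum.inr y)) = (r₁ : ℝ) := by
    rw [← rowsum_reg hreg w]
    apply Finset.sum_congr rfl
    intro y _
    show adjMat ℝ H w.1 y.1 = adjMat ℝ (delVert H u) w y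
    simp [adjMat, delVert]
  rw [h1, h2]
  ring

section Hside
variable {W : Type*} [Fintype W] [DecidableEq W] {H : SimpleGraph W} {u : W} {m r₁ : ℕ}

lemma rowsum_D0 (hreg : IsReg (delVert H u) r₁) (x : ℝ) (w : {w : W // w ≠ u}) :
    ∑ w', (x • (1 : Matrix {w : W // w ≠ u} {w : W // w ≠ u} ℝ)
      - (adjMat ℝ (delVert H u) + ((1 : ℝ) + r₁) • 1)) w w'
      = x - (1 + 2 * r₁) := by
  simp only [Matrix.sub_apply, Matrix.add_apply, Matrix.smul_apply, Matrix.one_apply,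
    smul_eq_mul, mul_ite, mul_one, mul_zero]
  rw [Finset.sum_sub_distrib, Finset.sum_add_distrib]
  rw [rowsum_reg hreg w]
  simp [Finset.sum_ite_eq]
  ring

lemma Hside_pointwise (hm : Fintype.card W = m) (hm2 : 2 ≤ m)
    (hdegu : ∀ w : W, w ≠ u → H.Adj u w) (hreg : IsReg (delVert H u) r₁)
    (x : ℝ)
    (hx : (x • (1 : Matrix _ _ ℝ) - (adjMat ℝ (delVert H u) + ((1 : ℝ) + r₁) • 1)).det ≠ 0)
    (hxc : x ≠ 1 + 2 * r₁) :
    (x • (1 : Matrix W W ℝ) - qMat ℝ H).det * (x - (1 + 2 * r₁))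
      = (x • (1 : Matrix _ _ ℝ) - (adjMat ℝ (delVert H u) + ((1 : ℝ) + r₁) • 1)).det
        * ((x - ((m : ℝ) - 1)) * (x - (1 + 2 * r₁)) - ((m : ℝ) - 1)) := by
  set ι := {w : W // w ≠ u}
  set A' := adjMat ℝ (delVert H u) with hA'
  set D₀ := x • (1 : Matrix ι ι ℝ) - (A' + ((1 : ℝ) + r₁) • 1) with hD₀
  set M := x • (1 : Matrix W W ℝ) - qMat ℝ H with hM
  set c : ℝ := 1 + 2 * r₁ with hc
  set A₁ : Matrix {y : W // y = u} {y : W // y = u} ℝ :=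
    Matrix.of fun _ _ => x - ((m : ℝ) - 1) with hA₁
  set B₁ : Matrix {y : W // y = u} ι ℝ := Matrix.of fun _ _ => (-1 : ℝ) with hB₁
  set C₁ : Matrix ι {y : W // y = u} ℝ := Matrix.of fun _ _ => (-1 : ℝ) with hC₁
  have hblock : M.submatrix (sumComplEquiv u) (sumComplEquiv u)
      = Matrix.fromBlocks A₁ B₁ C₁ D₀ := by
    ext i j
    cases' i with i i <;> cases' j with j j
    · show M i.1 j.1 = A₁ i j
      rw [hM]
      simp only [Matrix.sub_apply, Matrix.smul_apply, Matrix.one_apply, qMat,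
        Matrix.add_apply, Matrix.diagonal_apply, adjMat, Matrix.of_apply]
      rw [i.2, j.2]
      simp [SimpleGraph.irrefl, gdeg_u_real m hm hm2 hdegu, hA₁]
    · show M i.1 j.1 = B₁ i j
      rw [hM]
      have hne : i.1 ≠ j.1 := by rw [i.2]; exact fun h => j.2 h.symm
      simp only [Matrix.sub_apply, Matrix.smul_apply, Matrix.one_apply, qMat,
        Matrix.add_apply, Matrix.diagonal_apply, adjMat, Matrix.of_apply]
      rw [if_neg hne, if_neg hne]
      have : H.Adj i.1 j.1 := by rw [i.2]; exact hdegu j.1 j.2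
      simp [this, hB₁]
    · show M i.1 j.1 = C₁ i j
      rw [hM]
      have hne : i.1 ≠ j.1 := by rw [j.2]; exact i.2
      simp only [Matrix.sub_apply, Matrix.smul_apply, Matrix.one_apply, qMat,
        Matrix.add_apply, Matrix.diagonal_apply, adjMat, Matrix.of_apply]
      rw [if_neg hne, if_neg hne]
      have : H.Adj i.1 j.1 := by rw [j.2]; exact H.adj_symm (hdegu i.1 i.2)
      simp [this, hC₁]
    · show M i.1 j.1 = D₀ i j
      rw [hM, hD₀]
      have hiff : i.1 = j.1 ↔ i = j := Subtype.ext_iff.symm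
      simp only [Matrix.sub_apply, Matrix.smul_apply, Matrix.one_apply, qMat,
        Matrix.add_apply, Matrix.diagonal_apply, adjMat, Matrix.of_apply, hA',
        delVert, SimpleGraph.comap_adj, Function.Embedding.coe_subtype]
      by_cases h : i = j
      · subst h
        simp [SimpleGraph.irrefl, gdeg_w_real hdegu hreg i]
        ring
      · have hne : (i : W) ≠ (j : W) := fun hh => h (Subtype.ext hh)
        rw [if_neg hne, if_neg hne]
        simp [h]
  have hdetM : M.det = (Matrix.fromBlocks A₁ B₁ C₁ D₀).det := by
    rw [← hblock, Matrix.det_submatrix_equiv_self]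
  have ht : x - c ≠ 0 := sub_ne_zero.mpr hxc
  have hDC : D₀ * C₁ = (x - c) • C₁ := by
    ext w j
    show ∑ w', D₀ w w' * (-1) = (x - c) * (-1)
    rw [← Finset.sum_mul]
    rw [rowsum_D0 hreg x w]
  have hBC : B₁ * C₁ = Matrix.of fun _ _ => ((m : ℝ) - 1) := by
    ext i j
    show ∑ w : ι, (-1 : ℝ) * (-1) = (m : ℝ) - 1
    simp [card_iota u m hm hm2]
    exact card_iota u m hm hm2
  have hschur := schur_engine A₁ B₁ C₁ D₀ (isUnit_iff_ne_zero.mpr hx) (x - c) ht hDC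
  rw [hdetM, hschur, hBC]
  have hdet1 : (A₁ - (x - c)⁻¹ • Matrix.of fun _ _ => ((m : ℝ) - 1)).det
      = (x - ((m : ℝ) - 1)) - (x - c)⁻¹ * ((m : ℝ) - 1) := by
    rw [Matrix.det_unique]
    rfl
  rw [hdet1]
  field_simp

end Hside

lemma Hside_poly {W : Type*} [Fintype W] [DecidableEq W] {H : SimpleGraph W} {u : W} {m r₁ : ℕ}
    (hm : Fintype.card W = m) (hm2 : 2 ≤ m)
    (hdegu : ∀ w : W, w ≠ u → H.Adj u w) (hreg : IsReg (delVert H u) r₁) :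
    (qMat ℝ H).charpoly * (X - C ((1 : ℝ) + 2 * r₁))
      = (adjMat ℝ (delVert H u) + ((1 : ℝ) + r₁) • 1).charpoly
        * ((X - C ((m : ℝ) - 1)) * (X - C ((1 : ℝ) + 2 * r₁)) - C ((m : ℝ) - 1)) := by
  set M₀ := adjMat ℝ (delVert H u) + ((1 : ℝ) + r₁) • (1 : Matrix _ _ ℝ) with hM₀
  have hpne : M₀.charpoly ≠ 0 := (Matrix.charpoly_monic M₀).ne_zero
  have hbad : ({x : ℝ | M₀.charpoly.IsRoot x} ∪ {(1 : ℝ) + 2 * r₁}).Finite :=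
    (Polynomial.finite_setOf_isRoot hpne).union (Set.finite_singleton _)
  apply Polynomial.eq_of_infinite_eval_eq
  apply Set.Infinite.mono (s := ({x : ℝ | M₀.charpoly.IsRoot x} ∪ {(1 : ℝ) + 2 * r₁})ᶜ)
  swap
  · exact hbad.infinite_compl
  intro x hx
  simp only [Set.mem_compl_iff, Set.mem_union, Set.mem_setOf_eq, Set.mem_singleton_iff,
    not_or] at hx
  obtain ⟨hx1, hx2⟩ := hx
  simp only [Set.mem_setOf_eq, eval_mul, eval_sub, eval_X, eval_C]
  rw [eval_charpoly', eval_charpoly']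
  have hxdet : (x • (1 : Matrix _ _ ℝ) - M₀).det ≠ 0 := by
    rw [← eval_charpoly']
    exact hx1
  exact Hside_pointwise hm hm2 hdegu hreg x hxdet hx2

section pocket
variable {V : Type*} [Fintype V] [DecidableEq V] (F : SimpleGraph V)
  (m r₁ : ℕ) {k : ℕ} (f : Fin k ↪ V)

noncomputable def tMat : Matrix V V ℝ :=
  Matrix.of fun a b =>
    (if a = b then ((gdeg F a : ℝ) + (if ∃ i, a = f i then (m : ℝ) - 1 else 0)) else 0)
      + adjMat ℝ F a b

noncomputable def dsMat : Matrix V V ℝ :=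
  Matrix.of fun a b => if a = b ∧ ∃ i, a = f i then (m : ℝ) - 1 else 0

noncomputable def psiPoly : ℝ[X] :=
  Matrix.det (Matrix.of fun a b =>
    (X - C ((1 : ℝ) + 2 * r₁)) * ((if a = b then X else 0) - C (tMat F m f a b))
      - C (dsMat m f a b))

lemma sum_f (a : V) (t : ℝ) :
    ∑ i : Fin k, (if a = f i then t else 0) = if ∃ i, a = f i then t else 0 := by
  by_cases h : ∃ i, a = f i
  · obtain ⟨i₀, rfl⟩ := h
    rw [if_pos ⟨i₀, rfl⟩]
    rw [Finset.sum_eq_single i₀]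
    · simp
    · intro j _ hj
      rw [if_neg]
      intro hh
      exact hj (f.injective hh.symm)
    · intro h; exact absurd (Finset.mem_univ i₀) h
  · rw [if_neg h]
    apply Finset.sum_eq_zero
    intro i _
    rw [if_neg (fun hh => h ⟨i, hh⟩)]

lemma sum_ff (a b : V) :
    ∑ i : Fin k, ((if a = f i then (1 : ℝ) else 0) * (if b = f i then 1 else 0))
      = if a = b ∧ ∃ i, a = f i then 1 else 0 := by
  by_cases hab : a = b
  · subst hab
    have h0 : ∀ i : Fin k, ((if a = f i then (1 : ℝ) else 0) * (if a = f i then 1 else 0))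
        = if a = f i then (1 : ℝ) else 0 := by
      intro i; by_cases h : a = f i <;> simp [h]
    simp only [h0]
    rw [sum_f]
    by_cases h : ∃ i, a = f i <;> simp [h]
  · have h0 : ∀ i : Fin k,
        ((if a = f i then (1 : ℝ) else 0) * (if b = f i then 1 else 0)) = 0 := by
      intro i
      by_cases h1 : a = f i
      · by_cases h2 : b = f i
        · exact absurd (h1.trans h2.symm) hab
        · simp [h2]
      · simp [h1]
    simp [h0, hab]

variable {W : Type*} [Fintype W] [DecidableEq W] {H : SimpleGraph W} {u : W}

omit [Fintype V] [DecidableEq V] [Fintype W] [DecidableEq W] in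
lemma padj_ll (a b : V) :
    (pocketGraph F H u f).Adj (Sum.inl a) (Sum.inl b) ↔ F.Adj a b := Iff.rfl

omit [Fintype V] [DecidableEq V] [Fintype W] [DecidableEq W] in
lemma padj_lr (a : V) (j : Fin k) (w' : {w : W // w ≠ u}) :
    (pocketGraph F H u f).Adj (Sum.inl a) (Sum.inr (j, w')) ↔ (a = f j ∧ H.Adj u w'.1) :=
  Iff.rfl

omit [Fintype V] [DecidableEq V] [Fintype W] [DecidableEq W] in
lemma padj_rl (a : V) (j : Fin k) (w' : {w : W // w ≠ u}) :
    (pocketGraph F H u f).Adj (Sum.inr (j, w')) (Sum.inl a) ↔ (a = f j ∧ H.Adj u w'.1) :=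
  Iff.rfl

omit [Fintype V] [DecidableEq V] [Fintype W] [DecidableEq W] in
lemma padj_rr (i j : Fin k) (w w' : {w : W // w ≠ u}) :
    (pocketGraph F H u f).Adj (Sum.inr (i, w)) (Sum.inr (j, w'))
      ↔ (i = j ∧ H.Adj w.1 w'.1) := Iff.rfl

lemma pocket_gdeg_inr (hm : Fintype.card W = m) (hm2 : 2 ≤ m)
    (hdegu : ∀ w : W, w ≠ u → H.Adj u w) (hreg : IsReg (delVert H u) r₁)
    (i : Fin k) (w : {w : W // w ≠ u}) :
    ((gdeg (pocketGraph F H u f) (Sum.inr (i, w)) : ℕ) : ℝ) = (r₁ : ℝ) + 1 := by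
  rw [gdeg_real, Fintype.sum_sum_type]
  have h1 : ∑ a : V, adjMat ℝ (pocketGraph F H u f) (Sum.inr (i, w)) (Sum.inl a) = 1 := by
    have h0 : ∀ a : V, adjMat ℝ (pocketGraph F H u f) (Sum.inr (i, w)) (Sum.inl a)
        = if a = f i then 1 else 0 := by
      intro a
      simp only [adjMat, Matrix.of_apply, padj_rl]
      by_cases h : a = f i <;> simp [h, hdegu w.1 w.2]
    simp only [h0]
    simp
  have h2 : ∑ p : Fin k × {w : W // w ≠ u},
      adjMat ℝ (pocketGraph F H u f) (Sum.inr (i, w)) (Sum.inr p) = (r₁ : ℝ) := by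
    rw [Fintype.sum_prod_type]
    have h0 : ∀ (j : Fin k) (w' : {w : W // w ≠ u}),
        adjMat ℝ (pocketGraph F H u f) (Sum.inr (i, w)) (Sum.inr (j, w'))
        = if i = j then adjMat ℝ (delVert H u) w w' else 0 := by
      intro j w'
      simp only [adjMat, Matrix.of_apply, padj_rr]
      by_cases h : i = j <;> simp [h, delVert]
    simp only [h0]
    have h3 : ∀ j : Fin k, ∑ w' : {w : W // w ≠ u},
        (if i = j then adjMat ℝ (delVert H u) w w' else 0)
        = if i = j then (r₁ : ℝ) else 0 := by
      intro j
      by_cases h : i = j <;> simp [h, rowsum_reg hreg w]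
    simp only [h3]
    simp
  rw [h1, h2]
  ring

lemma pocket_gdeg_inl (hm : Fintype.card W = m) (hm2 : 2 ≤ m)
    (hdegu : ∀ w : W, w ≠ u → H.Adj u w) (a : V) :
    ((gdeg (pocketGraph F H u f) (Sum.inl a) : ℕ) : ℝ)
      = (gdeg F a : ℝ) + (if ∃ i, a = f i then (m : ℝ) - 1 else 0) := by
  rw [gdeg_real, Fintype.sum_sum_type]
  have h1 : ∑ b : V, adjMat ℝ (pocketGraph F H u f) (Sum.inl a) (Sum.inl b)
      = ((gdeg F a : ℕ) : ℝ) := by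
    rw [gdeg_real]
    apply Finset.sum_congr rfl
    intro b _
    simp only [adjMat, Matrix.of_apply, padj_ll]
  have h2 : ∑ p : Fin k × {w : W // w ≠ u},
      adjMat ℝ (pocketGraph F H u f) (Sum.inl a) (Sum.inr p)
      = (if ∃ i, a = f i then (m : ℝ) - 1 else 0) := by
    rw [Fintype.sum_prod_type]
    have h0 : ∀ (j : Fin k) (w' : {w : W // w ≠ u}),
        adjMat ℝ (pocketGraph F H u f) (Sum.inl a) (Sum.inr (j, w'))
        = if a = f j then 1 else 0 := by
      intro j w'
      simp only [adjMat, Matrix.of_apply, padj_lr]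
      by_cases h : a = f j <;> simp [h, hdegu w'.1 w'.2]
    simp only [h0]
    have h3 : ∀ j : Fin k, ∑ _w' : {w : W // w ≠ u}, (if a = f j then (1:ℝ) else 0)
        = if a = f j then ((m : ℝ) - 1) else 0 := by
      intro j
      rw [Finset.sum_const, Finset.card_univ]
      by_cases h : a = f j
      · rw [if_pos h, if_pos h, nsmul_eq_mul, mul_one, card_iota u m hm hm2]
      · rw [if_neg h, if_neg h, smul_zero]
    simp only [h3]
    exact sum_f f a _
  rw [h1, h2]

end pocket

section pocketdet
variable {V : Type*} [Fintype V] [DecidableEq V] {F : SimpleGraph V}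
  {m r₁ : ℕ} {k : ℕ} {f : Fin k ↪ V}
  {W : Type*} [Fintype W] [DecidableEq W] {H : SimpleGraph W} {u : W}

lemma pocket_pointwise (hm : Fintype.card W = m) (hm2 : 2 ≤ m)
    (hdegu : ∀ w : W, w ≠ u → H.Adj u w) (hreg : IsReg (delVert H u) r₁)
    (x : ℝ)
    (hx : (x • (1 : Matrix _ _ ℝ) - (adjMat ℝ (delVert H u) + ((1 : ℝ) + r₁) • 1)).det ≠ 0)
    (hxc : x ≠ 1 + 2 * r₁) :
    (x • (1 : Matrix _ _ ℝ) - qMat ℝ (pocketGraph F H u f)).det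
        * (x - (1 + 2 * r₁)) ^ (Fintype.card V)
      = (x • (1 : Matrix _ _ ℝ) - (adjMat ℝ (delVert H u) + ((1 : ℝ) + r₁) • 1)).det ^ k
        * (psiPoly F m r₁ f).eval x := by
  classical
  set ι := {w : W // w ≠ u}
  set A' := adjMat ℝ (delVert H u) with hA'
  set D₀ := x • (1 : Matrix ι ι ℝ) - (A' + ((1 : ℝ) + r₁) • 1) with hD₀
  set c : ℝ := 1 + 2 * r₁ with hc
  have ht : x - c ≠ 0 := sub_ne_zero.mpr hxc
  set PG := pocketGraph F H u f with hPG
  set M := x • (1 : Matrix (V ⊕ (Fin k × ι)) (V ⊕ (Fin k × ι)) ℝ) - qMat ℝ PG with hM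
  set A₁ : Matrix V V ℝ := Matrix.of fun a b => (if a = b then x else 0) - tMat F m f a b
    with hA₁
  set B₁ : Matrix V (Fin k × ι) ℝ :=
    Matrix.of fun a p => -(if a = f p.1 then (1 : ℝ) else 0) with hB₁
  set C₁ : Matrix (Fin k × ι) V ℝ :=
    Matrix.of fun p a => -(if a = f p.1 then (1 : ℝ) else 0) with hC₁
  set D : Matrix (Fin k × ι) (Fin k × ι) ℝ :=
    Matrix.of fun p q => if p.1 = q.1 then D₀ p.2 q.2 else 0 with hD
  have hblock : M = Matrix.fromBlocks A₁ B₁ C₁ D := by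
    ext i j
    rcases i with a | ⟨i, w⟩ <;> rcases j with b | ⟨j, w'⟩
    · show M (Sum.inl a) (Sum.inl b) = A₁ a b
      rw [hM]
      have hadj : adjMat ℝ PG (Sum.inl a) (Sum.inl b) = adjMat ℝ F a b := by
        simp only [adjMat, Matrix.of_apply, hPG, padj_ll]
      have hgd : ((gdeg PG (Sum.inl a) : ℕ) : ℝ)
          = (gdeg F a : ℝ) + (if ∃ i, a = f i then (m : ℝ) - 1 else 0) :=
        pocket_gdeg_inl F m f hm hm2 hdegu a
      simp only [Matrix.sub_apply, Matrix.smul_apply, Matrix.one_apply, qMat,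
        Matrix.add_apply, Matrix.diagonal_apply, Sum.inl.injEq, hA₁, Matrix.of_apply,
        tMat, smul_eq_mul, mul_ite, mul_one, mul_zero, hadj,
        hgd]
    · show M (Sum.inl a) (Sum.inr (j, w')) = B₁ a (j, w')
      rw [hM]
      have hadj : adjMat ℝ PG (Sum.inl a) (Sum.inr (j, w')) = if a = f j then 1 else 0 := by
        simp only [adjMat, Matrix.of_apply, hPG, padj_lr]
        by_cases h : a = f j <;> simp [h, hdegu w'.1 w'.2]
      have hne : (Sum.inl a : V ⊕ (Fin k × ι)) ≠ Sum.inr (j, w') := by simp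
      simp only [Matrix.sub_apply, Matrix.smul_apply, Matrix.one_apply, qMat,
        Matrix.add_apply, Matrix.diagonal_apply, hB₁, Matrix.of_apply, hadj,
        if_neg hne]
      simp
    · show M (Sum.inr (i, w)) (Sum.inl b) = C₁ (i, w) b
      rw [hM]
      have hadj : adjMat ℝ PG (Sum.inr (i, w)) (Sum.inl b) = if b = f i then 1 else 0 := by
        simp only [adjMat, Matrix.of_apply, hPG, padj_rl]
        by_cases h : b = f i <;> simp [h, hdegu w.1 w.2]
      have hne : (Sum.inr (i, w) : V ⊕ (Fin k × ι)) ≠ Sum.inl b := by simp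
      simp only [Matrix.sub_apply, Matrix.smul_apply, Matrix.one_apply, qMat,
        Matrix.add_apply, Matrix.diagonal_apply, hC₁, Matrix.of_apply, hadj,
        if_neg hne]
      simp
    · show M (Sum.inr (i, w)) (Sum.inr (j, w')) = D (i, w) (j, w')
      rw [hM]
      have hadj : adjMat ℝ PG (Sum.inr (i, w)) (Sum.inr (j, w'))
          = if i = j then A' w w' else 0 := by
        simp only [adjMat, Matrix.of_apply, hPG, padj_rr]
        by_cases h : i = j <;> simp [h, hA', adjMat, delVert]
      have hgd2 : ((gdeg PG (Sum.inr (i, w)) : ℕ) : ℝ) = (r₁ : ℝ) + 1 :=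
        pocket_gdeg_inr F m r₁ f hm hm2 hdegu hreg i w
      simp only [Matrix.sub_apply, Matrix.smul_apply, Matrix.one_apply, qMat,
        Matrix.add_apply, Matrix.diagonal_apply, hD, Matrix.of_apply, hadj,
        hgd2, hD₀]
      by_cases h : i = j
      · subst h
        simp only [if_pos rfl]
        by_cases h2 : w = w'
        · subst h2
          have hAww : A' w w = 0 := by
            simp [hA', adjMat, delVert, SimpleGraph.irrefl]
          simp [Matrix.sub_apply, Matrix.smul_apply, Matrix.one_apply,
            Matrix.add_apply, hAww]
          ring
        · have hne : (Sum.inr (i, w) : V ⊕ (Fin k × ι)) ≠ Sum.inr (i, w') := by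
            simp [h2]
          simp [Matrix.sub_apply, Matrix.smul_apply, Matrix.one_apply,
            Matrix.add_apply, hne, h2]
      · have hne : (Sum.inr (i, w) : V ⊕ (Fin k × ι)) ≠ Sum.inr (j, w') := by
          simp [h]
        simp [hne, h]
  -- determinant of D
  have hdetD : D.det = D₀.det ^ k := by
    have heq : D = (Matrix.blockDiagonal fun _ : Fin k => D₀).submatrix
        (Equiv.prodComm (Fin k) ι) (Equiv.prodComm (Fin k) ι) := by
      ext ⟨i, w⟩ ⟨j, w'⟩
      simp only [hD, Matrix.of_apply, Matrix.submatrix_apply, Equiv.prodComm_apply,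
        Prod.swap_prod_mk, Matrix.blockDiagonal_apply]
    rw [heq, Matrix.det_submatrix_equiv_self, Matrix.det_blockDiagonal]
    simp
  have hDdet_unit : IsUnit D.det := by
    rw [hdetD]
    exact isUnit_iff_ne_zero.mpr (pow_ne_zero k hx)
  -- D * C₁ = (x - c) • C₁
  have hDC : D * C₁ = (x - c) • C₁ := by
    ext ⟨i, w⟩ a
    show ∑ q : Fin k × ι, D (i, w) q * C₁ q a = (x - c) * C₁ (i, w) a
    rw [Fintype.sum_prod_type]
    have h0 : ∀ (j : Fin k) (w' : ι), D (i, w) (j, w') * C₁ (j, w') a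
        = if i = j then D₀ w w' * (-(if a = f j then (1 : ℝ) else 0)) else 0 := by
      intro j w'
      simp only [hD, hC₁, Matrix.of_apply]
      by_cases h : i = j <;> simp [h]
    simp only [h0]
    have h1 : ∀ j : Fin k, ∑ w' : ι,
        (if i = j then D₀ w w' * (-(if a = f j then (1 : ℝ) else 0)) else 0)
        = if i = j then (x - c) * (-(if a = f j then (1 : ℝ) else 0)) else 0 := by
      intro j
      by_cases h : i = j
      · simp only [if_pos h, ← Finset.sum_mul]
        rw [rowsum_D0 hreg x w]
      · simp [h]
    simp only [h1]
    simp only [Finset.sum_ite_eq Finset.univ i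
      (fun j => (x - c) * (-(if a = f j then (1 : ℝ) else 0))), Finset.mem_univ, if_true]
    simp [hC₁]
  -- B₁ * C₁ = dsMat
  have hBC : B₁ * C₁ = dsMat m f := by
    ext a b
    show ∑ q : Fin k × ι, B₁ a q * C₁ q b = dsMat m f a b
    rw [Fintype.sum_prod_type]
    have h0 : ∀ (j : Fin k) (w' : ι), B₁ a (j, w') * C₁ (j, w') b
        = (if a = f j then (1 : ℝ) else 0) * (if b = f j then 1 else 0) := by
      intro j w'
      simp only [hB₁, hC₁, Matrix.of_apply]
      ring
    simp only [h0]
    have h1 : ∀ j : Fin k, ∑ _w' : ι,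
        ((if a = f j then (1:ℝ) else 0) * (if b = f j then 1 else 0))
        = ((m:ℝ) - 1) * ((if a = f j then (1:ℝ) else 0) * (if b = f j then 1 else 0)) := by
      intro j
      rw [Finset.sum_const, Finset.card_univ, nsmul_eq_mul, card_iota u m hm hm2]
    simp only [h1]
    rw [← Finset.mul_sum, sum_ff f a b]
    show ((m:ℝ) - 1) * (if a = b ∧ ∃ i, a = f i then 1 else 0) = dsMat m f a b
    simp only [dsMat, Matrix.of_apply]
    by_cases h : a = b ∧ ∃ i, a = f i <;> simp [h]
  have hdetM : M.det = D.det * (A₁ - (x - c)⁻¹ • (B₁ * C₁)).det := by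
    rw [hblock]
    exact schur_engine A₁ B₁ C₁ D hDdet_unit (x - c) ht hDC
  have hpsi : (psiPoly F m r₁ f).eval x
      = (x - c) ^ (Fintype.card V) * (A₁ - (x - c)⁻¹ • dsMat m f).det := by
    rw [psiPoly, ← Polynomial.coe_evalRingHom, RingHom.map_det]
    have hmap : (Matrix.of fun a b =>
        (X - C ((1:ℝ) + 2*r₁)) * ((if a = b then X else 0) - C (tMat F m f a b))
          - C (dsMat m f a b)).map (Polynomial.evalRingHom x)
        = (x - c) • (A₁ - (x - c)⁻¹ • dsMat m f) := by
      ext a b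
      simp only [Matrix.map_apply, Matrix.of_apply, coe_evalRingHom,
        eval_sub, eval_mul, eval_X, eval_C, Matrix.smul_apply, Matrix.sub_apply, hA₁,
        smul_eq_mul]
      rw [apply_ite (Polynomial.eval x)]
      simp only [eval_X, eval_zero]
      rw [← hc]
      field_simp
    rw [RingHom.mapMatrix_apply, hmap, Matrix.det_smul]
  rw [hdetM, hBC, hpsi, hdetD]
  ring

end pocketdet

lemma pocket_poly {V : Type*} [Fintype V] [DecidableEq V] {F : SimpleGraph V}
    {m r₁ : ℕ} {k : ℕ} {f : Fin k ↪ V}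
    {W : Type*} [Fintype W] [DecidableEq W] {H : SimpleGraph W} {u : W}
    (hm : Fintype.card W = m) (hm2 : 2 ≤ m)
    (hdegu : ∀ w : W, w ≠ u → H.Adj u w) (hreg : IsReg (delVert H u) r₁) :
    (qMat ℝ (pocketGraph F H u f)).charpoly * (X - C ((1 : ℝ) + 2 * r₁)) ^ (Fintype.card V)
      = (adjMat ℝ (delVert H u) + ((1 : ℝ) + r₁) • 1).charpoly ^ k * psiPoly F m r₁ f := by
  set M₀ := adjMat ℝ (delVert H u) + ((1 : ℝ) + r₁) • (1 : Matrix _ _ ℝ) with hM₀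
  have hpne : M₀.charpoly ≠ 0 := (Matrix.charpoly_monic M₀).ne_zero
  have hbad : ({x : ℝ | M₀.charpoly.IsRoot x} ∪ {(1 : ℝ) + 2 * r₁}).Finite :=
    (Polynomial.finite_setOf_isRoot hpne).union (Set.finite_singleton _)
  apply Polynomial.eq_of_infinite_eval_eq
  apply Set.Infinite.mono (s := ({x : ℝ | M₀.charpoly.IsRoot x} ∪ {(1 : ℝ) + 2 * r₁})ᶜ)
  swap
  · exact hbad.infinite_compl
  intro x hx
  simp only [Set.mem_compl_iff, Set.mem_union, Set.mem_setOf_eq, Set.mem_singleton_iff,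
    not_or] at hx
  obtain ⟨hx1, hx2⟩ := hx
  simp only [Set.mem_setOf_eq, eval_mul, eval_pow, eval_sub, eval_X, eval_C]
  rw [eval_charpoly', eval_charpoly']
  have hxdet : (x • (1 : Matrix _ _ ℝ) - M₀).det ≠ 0 := by
    rw [← eval_charpoly']
    exact hx1
  exact pocket_pointwise hm hm2 hdegu hreg x hxdet hx2

lemma charpoly_instindep {n : Type*} [Fintype n] (M : Matrix n n ℝ) (i1 i2 : DecidableEq n) :
    @Matrix.charpoly ℝ _ n i1 _ M = @Matrix.charpoly ℝ _ n i2 _ M := by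
  obtain rfl : i1 = i2 := Subsingleton.elim i1 i2
  rfl

lemma qMat_herm {V : Type*} [Fintype V] [DecidableEq V] (G : SimpleGraph V) :
    (qMat ℝ G).IsHermitian := by
  ext i j
  simp only [Matrix.conjTranspose_apply, qMat, Matrix.add_apply, Matrix.diagonal_apply,
    adjMat, Matrix.of_apply, star_trivial]
  by_cases h : i = j
  · subst h; rfl
  · rw [if_neg (fun hh : j = i => h hh.symm), if_neg h]
    simp only [zero_add]
    by_cases h2 : G.Adj i j
    · rw [if_pos h2, if_pos (G.adj_symm h2)]
    · rw [if_neg h2, if_neg (fun hh => h2 (G.adj_symm hh))]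


/-- Corollary 3.7. -/
theorem signlessLap_cospectral_pocketGraph
    {V W₁ W₂ : Type*} [Fintype V] [DecidableEq V] [Fintype W₁] [DecidableEq W₁]
    [Fintype W₂] [DecidableEq W₂]
    (m k r₁ : ℕ) (hmu : Fintype.card W₁ = m) (hmv : Fintype.card W₂ = m)
    (hm2 : 2 ≤ m) (hr₁ : 1 ≤ r₁)
    (F : SimpleGraph V) (Hu : SimpleGraph W₁) (Hv : SimpleGraph W₂) (u : W₁) (v : W₂)
    (hdegu : ∀ w : W₁, w ≠ u → Hu.Adj u w) (hdegv : ∀ w : W₂, w ≠ v → Hv.Adj v w)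
    (hregu : IsReg (delVert Hu u) r₁) (hregv : IsReg (delVert Hv v) r₁)
    (f : Fin k ↪ V)
    (hcos : qSpec Hu = qSpec Hv) :
    qSpec (pocketGraph F Hu u f) = qSpec (pocketGraph F Hv v f) := by
  have hcos' : (qMat ℝ Hu).charpoly.roots = (qMat ℝ Hv).charpoly.roots := by
    have h := hcos
    unfold qSpec at h
    rw [charpoly_instindep (qMat ℝ Hu) _ _, charpoly_instindep (qMat ℝ Hv) _ _] at h
    exact h
  have hq : (qMat ℝ Hu).charpoly = (qMat ℝ Hv).charpoly := by
    conv_lhs => rw [herm_charpoly_roots (qMat_herm Hu)]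
    conv_rhs => rw [herm_charpoly_roots (qMat_herm Hv)]
    rw [hcos']
  set c : ℝ := 1 + 2 * r₁ with hc
  set g : ℝ[X] := (X - C ((m : ℝ) - 1)) * (X - C c) - C ((m : ℝ) - 1) with hg
  have hgne : g ≠ 0 := by
    intro h
    have h2 := congrArg (eval ((m : ℝ) - 1)) h
    simp only [hg, eval_sub, eval_mul, eval_X, eval_C, sub_self, zero_mul, eval_zero,
      zero_sub, neg_eq_zero] at h2
    have : (2 : ℝ) ≤ (m : ℝ) := by exact_mod_cast hm2
    linarith
  have hpu := Hside_poly hmu hm2 hdegu hregu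
  have hpv := Hside_poly hmv hm2 hdegv hregv
  have hp : (adjMat ℝ (delVert Hu u) + ((1 : ℝ) + r₁) • 1).charpoly
      = (adjMat ℝ (delVert Hv v) + ((1 : ℝ) + r₁) • 1).charpoly := by
    apply mul_right_cancel₀ hgne
    rw [← hg] at hpu hpv
    rw [← hpu, ← hpv, hq]
  have hcq : (qMat ℝ (pocketGraph F Hu u f)).charpoly
      = (qMat ℝ (pocketGraph F Hv v f)).charpoly := by
    apply mul_right_cancel₀
      (pow_ne_zero (Fintype.card V) (Polynomial.X_sub_C_ne_zero c))
    rw [pocket_poly hmu hm2 hdegu hregu, pocket_poly hmv hm2 hdegv hregv, hp]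
  unfold qSpec
  rw [charpoly_instindep (qMat ℝ (pocketGraph F Hu u f)) _ _,
    charpoly_instindep (qMat ℝ (pocketGraph F Hv v f)) _ _, hcq]
end

section
/- Let 𝓔_k be an r-regular spanning subgraph of F (so p = n), and let G = G[F,E_k,H_{uv}] with |E_k| = k. Then for every complex number x such that x − 2 is not an eigenvalue of Q(H_2), f_{Q(G)}(x) = (f_{Q(H_2)}(x−2))^k · det(x I_n − M), where M = r·((m−2) + Γ_{Q(H_2)}(x−2))·I_n + Q(F) + Γ_{Q(H_2)}(x−2)·A(𝓔_k). -/
open Matrix BigOperators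
open scoped Classical

private lemma card_filter_sumType {α β : Type*} [Fintype α] [Fintype β]
    (p : α ⊕ β → Prop) [DecidablePred p] [DecidablePred (fun a => p (Sum.inl a))]
    [DecidablePred (fun b => p (Sum.inr b))] :
    (Finset.univ.filter p).card
      = (Finset.univ.filter fun a => p (Sum.inl a)).card
        + (Finset.univ.filter fun b => p (Sum.inr b)).card := by
  rw [← Finset.card_toLeft_add_card_toRight]
  have h1 : (Finset.univ.filter p).toLeft = Finset.univ.filter fun a => p (Sum.inl a) := by
    ext a; simp
  have h2 : (Finset.univ.filter p).toRight = Finset.univ.filter fun b => p (Sum.inr b) := by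
    ext b; simp
  rw [h1, h2]

private lemma card_filter_prodFst {α β : Type*} [Fintype α] [Fintype β]
    (q : α → Prop) [DecidablePred q] [DecidablePred (fun y : α × β => q y.1)] :
    (Finset.univ.filter fun y : α × β => q y.1).card
      = (Finset.univ.filter q).card * Fintype.card β := by
  have h : (Finset.univ.filter fun y : α × β => q y.1)
      = (Finset.univ.filter q) ×ˢ (Finset.univ : Finset β) := by
    ext y; simp
  rw [h, Finset.card_product, Finset.card_univ]

private lemma epg_adj_ll {V W : Type*} (F : SimpleGraph V) (H : SimpleGraph W) (u v : W)
    {k : ℕ} (a b : Fin k → V) (s t : V) :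
    (edgePocketGraph F H u v a b).Adj (Sum.inl s) (Sum.inl t) ↔ F.Adj s t := Iff.rfl

private lemma epg_adj_lr {V W : Type*} (F : SimpleGraph V) (H : SimpleGraph W) (u v : W)
    {k : ℕ} (a b : Fin k → V) (s : V) (i : Fin k) (w : {w : W // w ≠ u ∧ w ≠ v}) :
    (edgePocketGraph F H u v a b).Adj (Sum.inl s) (Sum.inr (i, w))
      ↔ (s = a i ∧ H.Adj u w.1) ∨ (s = b i ∧ H.Adj v w.1) := Iff.rfl

private lemma epg_adj_rl {V W : Type*} (F : SimpleGraph V) (H : SimpleGraph W) (u v : W)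
    {k : ℕ} (a b : Fin k → V) (s : V) (i : Fin k) (w : {w : W // w ≠ u ∧ w ≠ v}) :
    (edgePocketGraph F H u v a b).Adj (Sum.inr (i, w)) (Sum.inl s)
      ↔ (s = a i ∧ H.Adj u w.1) ∨ (s = b i ∧ H.Adj v w.1) := Iff.rfl

private lemma epg_adj_rr {V W : Type*} (F : SimpleGraph V) (H : SimpleGraph W) (u v : W)
    {k : ℕ} (a b : Fin k → V) (i j : Fin k) (w w' : {w : W // w ≠ u ∧ w ≠ v}) :
    (edgePocketGraph F H u v a b).Adj (Sum.inr (i, w)) (Sum.inr (j, w'))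
      ↔ i = j ∧ H.Adj w.1 w'.1 := Iff.rfl

/-- Proposition 4.4 of the paper, spanning case. -/
theorem signlessLap_charpoly_edgePocketGraph_spanning
    {V W : Type*} [Fintype V] [DecidableEq V] [Fintype W] [DecidableEq W]
    (n m k r : ℕ) (hn : Fintype.card V = n) (hn2 : 2 ≤ n)
    (hm : Fintype.card W = m) (hm3 : 3 ≤ m)
    (F : SimpleGraph V) (H : SimpleGraph W) (u v : W) (huv : u ≠ v)
    (hdegu : ∀ w : W, w ≠ u → H.Adj u w) (hdegv : ∀ w : W, w ≠ v → H.Adj v w)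
    (a b : Fin k → V) (hab : ∀ i, F.Adj (a i) (b i))
    (hinj : Function.Injective fun i => s(a i, b i))
    (E : SimpleGraph V)
    (hE : ∀ s t : V, E.Adj s t ↔ ∃ i, s(s, t) = s(a i, b i))
    (hreg : IsReg E r)
    (x : ℂ)
    (hx : ((x - 2) • (1 : Matrix {w : W // w ≠ u ∧ w ≠ v} {w : W // w ≠ u ∧ w ≠ v} ℂ)
            - qMat ℂ (delVert2 H u v)).det ≠ 0) :
    (x • (1 : Matrix (V ⊕ (Fin k × {w : W // w ≠ u ∧ w ≠ v}))
            (V ⊕ (Fin k × {w : W // w ≠ u ∧ w ≠ v})) ℂ)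
        - qMat ℂ (edgePocketGraph F H u v a b)).det
      = (((x - 2) • (1 : Matrix {w : W // w ≠ u ∧ w ≠ v} {w : W // w ≠ u ∧ w ≠ v} ℂ)
            - qMat ℂ (delVert2 H u v)).det) ^ k
        * (x • (1 : Matrix V V ℂ)
            - (((r : ℂ) * (((m : ℂ) - 2) + coronal (qMat ℂ (delVert2 H u v)) (x - 2)))
                  • (1 : Matrix V V ℂ)
                + qMat ℂ F
                + coronal (qMat ℂ (delVert2 H u v)) (x - 2) • adjMat ℂ E)).det := by
  classical
  set G := edgePocketGraph F H u v a b with hGdef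
  set H2 := delVert2 H u v with hH2def
  set Y : Matrix {w : W // w ≠ u ∧ w ≠ v} {w : W // w ≠ u ∧ w ≠ v} ℂ :=
    (x - 2) • (1 : Matrix _ _ ℂ) - qMat ℂ H2 with hYdef
  set Γ := coronal (qMat ℂ H2) (x - 2) with hΓdef
  have habne : ∀ i, a i ≠ b i := fun i => (hab i).ne
  -- cardinality of the pocket vertex set
  have hS : Fintype.card {w : W // w ≠ u ∧ w ≠ v} = m - 2 := by
    rw [Fintype.card_subtype]
    have h1 : (Finset.univ.filter fun w : W => w ≠ u ∧ w ≠ v)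
        = Finset.univ \ {u, v} := by
      ext w; simp [not_or]
    rw [h1, Finset.card_sdiff_of_subset (Finset.subset_univ _), Finset.card_univ, hm]
    congr 1
    rw [Finset.card_insert_of_notMem (by simpa using huv), Finset.card_singleton]
  -- the key Sym2 characterization
  have hpair : ∀ (s t : V) (i : Fin k), s ≠ t →
      (((s = a i ∨ s = b i) ∧ (t = a i ∨ t = b i)) ↔ s(s, t) = s(a i, b i)) := by
    intro s t i hst
    constructor
    · rintro ⟨hs | hs, ht | ht⟩
      · exact absurd (hs.trans ht.symm) hst
      · rw [hs, ht]
      · rw [hs, ht]; exact Sym2.eq_swap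
      · exact absurd (hs.trans ht.symm) hst
    · intro h
      rcases Sym2.eq_iff.mp h with ⟨h1, h2⟩ | ⟨h1, h2⟩
      · exact ⟨Or.inl h1, Or.inr h2⟩
      · exact ⟨Or.inr h1, Or.inl h2⟩
  -- the count of pockets at a vertex is r
  have hcount1 : ∀ s : V,
      (Finset.univ.filter fun i : Fin k => s = a i ∨ s = b i).card = r := by
    intro s
    rw [← hreg s]
    unfold gdeg
    apply Finset.card_bij (fun i _ => if s = a i then b i else a i)
    · intro i hi
      simp only [Finset.mem_filter, Finset.mem_univ, true_and] at hi ⊢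
      by_cases h : s = a i
      · rw [if_pos h]
        exact (hE s (b i)).mpr ⟨i, by rw [h]⟩
      · rcases hi with h' | h'
        · exact absurd h' h
        · rw [if_neg h]
          exact (hE s (a i)).mpr ⟨i, by rw [h']; exact Sym2.eq_swap⟩
    · intro i hi j hj hij
      simp only [Finset.mem_filter, Finset.mem_univ, true_and] at hi hj
      have key : ∀ l : Fin k, (s = a l ∨ s = b l) →
          s(a l, b l) = s(s, if s = a l then b l else a l) := by
        intro l hl
        by_cases h : s = a l
        · rw [if_pos h, h]
        · rcases hl with h' | h'
          · exact absurd h' h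
          · rw [if_neg h, h']; exact Sym2.eq_swap
      apply hinj
      show s(a i, b i) = s(a j, b j)
      rw [key i hi, key j hj, hij]
    · intro t ht
      simp only [Finset.mem_filter, Finset.mem_univ, true_and] at ht
      obtain ⟨i, hi⟩ := (hE s t).mp ht
      rcases Sym2.eq_iff.mp hi with ⟨h1, h2⟩ | ⟨h1, h2⟩
      · exact ⟨i, Finset.mem_filter.mpr ⟨Finset.mem_univ _, Or.inl h1⟩,
          by rw [if_pos h1, ← h2]⟩
      · refine ⟨i, Finset.mem_filter.mpr ⟨Finset.mem_univ _, Or.inr h1⟩, ?_⟩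
        have hna : s ≠ a i := by
          intro hc
          exact habne i (hc.symm.trans h1)
        rw [if_neg hna, ← h2]
  -- the count of common pockets for s ≠ t
  have hcount2 : ∀ s t : V, s ≠ t →
      (Finset.univ.filter fun i : Fin k =>
        (s = a i ∨ s = b i) ∧ (t = a i ∨ t = b i)).card
      = if E.Adj s t then 1 else 0 := by
    intro s t hst
    by_cases hadj : E.Adj s t
    · rw [if_pos hadj]
      obtain ⟨i₀, hi₀⟩ := (hE s t).mp hadj
      have : (Finset.univ.filter fun i : Fin k =>
          (s = a i ∨ s = b i) ∧ (t = a i ∨ t = b i)) = {i₀} := by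
        ext i
        simp only [Finset.mem_filter, Finset.mem_univ, true_and, Finset.mem_singleton]
        rw [hpair s t i hst]
        constructor
        · intro h; exact hinj (h.symm.trans hi₀ : s(a i, b i) = s(a i₀, b i₀))
        · rintro rfl; exact hi₀
      rw [this, Finset.card_singleton]
    · rw [if_neg hadj]
      rw [Finset.card_eq_zero]
      ext i
      simp only [Finset.mem_filter, Finset.mem_univ, true_and, Finset.notMem_empty,
        iff_false]
      intro h
      exact hadj ((hE s t).mpr ⟨i, (hpair s t i hst).mp h⟩)
  -- degrees in G
  have hdegG1 : ∀ s : V, gdeg G (Sum.inl s) = gdeg F s + r * (m - 2) := by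
    intro s
    unfold gdeg
    rw [card_filter_sumType]
    have hL : (Finset.univ.filter fun t : V => G.Adj (Sum.inl s) (Sum.inl t)).card
        = (Finset.univ.filter fun t : V => F.Adj s t).card := rfl
    rw [hL]
    congr 1
    have h1 : (Finset.univ.filter fun p : Fin k × {w : W // w ≠ u ∧ w ≠ v} =>
        G.Adj (Sum.inl s) (Sum.inr p))
        = Finset.univ.filter fun p : Fin k × {w : W // w ≠ u ∧ w ≠ v} =>
          s = a p.1 ∨ s = b p.1 := by
      ext p
      simp only [Finset.mem_filter, Finset.mem_univ, true_and]
      rw [hGdef]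
      rw [show (Sum.inr p : V ⊕ (Fin k × {w : W // w ≠ u ∧ w ≠ v})) = Sum.inr (p.1, p.2) from rfl]
      rw [epg_adj_lr]
      constructor
      · rintro (⟨h, _⟩ | ⟨h, _⟩)
        · exact Or.inl h
        · exact Or.inr h
      · rintro (h | h)
        · exact Or.inl ⟨h, hdegu p.2.1 p.2.2.1⟩
        · exact Or.inr ⟨h, hdegv p.2.1 p.2.2.2⟩
    rw [h1]
    rw [card_filter_prodFst (β := {w : W // w ≠ u ∧ w ≠ v})
      (fun i : Fin k => s = a i ∨ s = b i), hcount1 s, hS]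
  have hdegG2 : ∀ (i : Fin k) (w : {w : W // w ≠ u ∧ w ≠ v}),
      gdeg G (Sum.inr (i, w)) = 2 + gdeg H2 w := by
    intro i w
    unfold gdeg
    rw [card_filter_sumType]
    have h1 : (Finset.univ.filter fun s : V => G.Adj (Sum.inr (i, w)) (Sum.inl s))
        = {a i, b i} := by
      ext s
      simp only [Finset.mem_filter, Finset.mem_univ, true_and, Finset.mem_insert,
        Finset.mem_singleton]
      rw [hGdef, epg_adj_rl]
      constructor
      · rintro (⟨h, _⟩ | ⟨h, _⟩)
        · exact Or.inl h
        · exact Or.inr h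
      · rintro (h | h)
        · exact Or.inl ⟨h, hdegu w.1 w.2.1⟩
        · exact Or.inr ⟨h, hdegv w.1 w.2.2⟩
    have h2 : (Finset.univ.filter fun p : Fin k × {w : W // w ≠ u ∧ w ≠ v} =>
        G.Adj (Sum.inr (i, w)) (Sum.inr p)).card = gdeg H2 w := by
      have he : (Finset.univ.filter fun p : Fin k × {w : W // w ≠ u ∧ w ≠ v} =>
          G.Adj (Sum.inr (i, w)) (Sum.inr p))
          = (Finset.univ.filter fun j : Fin k => i = j)
            ×ˢ (Finset.univ.filter fun w' : {w : W // w ≠ u ∧ w ≠ v} => H.Adj w.1 w'.1) := by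
        ext p
        simp only [Finset.mem_filter, Finset.mem_univ, true_and, Finset.mem_product]
        rw [hGdef]
        rw [show (Sum.inr p : V ⊕ (Fin k × {w : W // w ≠ u ∧ w ≠ v})) = Sum.inr (p.1, p.2) from rfl]
        rw [epg_adj_rr]
      rw [he, Finset.card_product]
      have hi : (Finset.univ.filter fun j : Fin k => i = j) = {i} := by
        ext j; simp [eq_comm]
      rw [hi, Finset.card_singleton, one_mul]
      rfl
    rw [h1, h2]
    congr 1
    rw [Finset.card_insert_of_notMem (by simpa using habne i), Finset.card_singleton]
  -- cast facts
  have hm2 : ((m - 2 : ℕ) : ℂ) = (m : ℂ) - 2 := by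
    rw [Nat.cast_sub (by omega : 2 ≤ m)]
    norm_num
  have hcast1 : ∀ s : V, ((gdeg G (Sum.inl s) : ℂ)) = (gdeg F s : ℂ) + (r : ℂ) * ((m : ℂ) - 2) := by
    intro s; rw [hdegG1 s, Nat.cast_add, Nat.cast_mul, hm2]
  have hcast2 : ∀ (i : Fin k) (w : {w : W // w ≠ u ∧ w ≠ v}),
      ((gdeg G (Sum.inr (i, w)) : ℂ)) = 2 + (gdeg H2 w : ℂ) := by
    intro i w; rw [hdegG2 i w, Nat.cast_add]; norm_num
  -- block matrices
  set A1 : Matrix V V ℂ :=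
    x • (1 : Matrix V V ℂ) - ((r : ℂ) * ((m : ℂ) - 2)) • (1 : Matrix V V ℂ) - qMat ℂ F with hA1
  set Bm : Matrix V (Fin k × {w : W // w ≠ u ∧ w ≠ v}) ℂ :=
    Matrix.of fun s p => -(if s = a p.1 ∨ s = b p.1 then (1 : ℂ) else 0) with hBm
  set Dm : Matrix (Fin k × {w : W // w ≠ u ∧ w ≠ v}) (Fin k × {w : W // w ≠ u ∧ w ≠ v}) ℂ :=
    Matrix.of fun p q => if p.1 = q.1 then Y p.2 q.2 else 0 with hDm
  set Dinv : Matrix (Fin k × {w : W // w ≠ u ∧ w ≠ v}) (Fin k × {w : W // w ≠ u ∧ w ≠ v}) ℂ :=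
    Matrix.of fun p q => if p.1 = q.1 then Y⁻¹ p.2 q.2 else 0 with hDinvdef
  -- the block decomposition
  have hblock : x • (1 : Matrix (V ⊕ (Fin k × {w : W // w ≠ u ∧ w ≠ v}))
        (V ⊕ (Fin k × {w : W // w ≠ u ∧ w ≠ v})) ℂ) - qMat ℂ G
      = Matrix.fromBlocks A1 Bm Bmᵀ Dm := by
    ext y z
    rcases y with s | ⟨i, w⟩ <;> rcases z with t | ⟨j, w'⟩
    · -- (inl, inl)
      have hadj : G.Adj (Sum.inl s) (Sum.inl t) ↔ F.Adj s t := Iff.rfl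
      simp only [Matrix.sub_apply, Matrix.smul_apply, Matrix.one_apply, qMat,
        Matrix.add_apply, Matrix.diagonal_apply, adjMat, Matrix.of_apply,
        Matrix.fromBlocks_apply₁₁, hA1, Sum.inl.injEq, smul_eq_mul, hadj]
      by_cases hst : s = t
      · subst hst
        simp only [if_pos rfl, hcast1 s, if_true, ite_true, eq_self_iff_true]
        ring
      · simp only [if_neg hst]
        ring
    · -- (inl, inr)
      have hadj : G.Adj (Sum.inl s) (Sum.inr (j, w')) ↔ s = a j ∨ s = b j := by
        rw [hGdef, epg_adj_lr]
        constructor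
        · rintro (⟨h, _⟩ | ⟨h, _⟩); exacts [Or.inl h, Or.inr h]
        · rintro (h | h)
          exacts [Or.inl ⟨h, hdegu w'.1 w'.2.1⟩, Or.inr ⟨h, hdegv w'.1 w'.2.2⟩]
      simp only [Matrix.sub_apply, Matrix.smul_apply, Matrix.one_apply, qMat,
        Matrix.add_apply, Matrix.diagonal_apply, adjMat, Matrix.of_apply,
        Matrix.fromBlocks_apply₁₂, hBm, smul_eq_mul, hadj]
      simp
    · -- (inr, inl)
      have hadj : G.Adj (Sum.inr (i, w)) (Sum.inl t) ↔ t = a i ∨ t = b i := by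
        rw [hGdef, epg_adj_rl]
        constructor
        · rintro (⟨h, _⟩ | ⟨h, _⟩); exacts [Or.inl h, Or.inr h]
        · rintro (h | h)
          exacts [Or.inl ⟨h, hdegu w.1 w.2.1⟩, Or.inr ⟨h, hdegv w.1 w.2.2⟩]
      simp only [Matrix.sub_apply, Matrix.smul_apply, Matrix.one_apply, qMat,
        Matrix.add_apply, Matrix.diagonal_apply, adjMat, Matrix.of_apply,
        Matrix.fromBlocks_apply₂₁, Matrix.transpose_apply, hBm, smul_eq_mul, hadj]
      simp
    · -- (inr, inr)
      have hadj : G.Adj (Sum.inr (i, w)) (Sum.inr (j, w')) ↔ i = j ∧ H.Adj w.1 w'.1 := by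
        rw [hGdef, epg_adj_rr]
      have hadj2 : H2.Adj w w' ↔ H.Adj w.1 w'.1 := Iff.rfl
      simp only [Matrix.sub_apply, Matrix.smul_apply, Matrix.one_apply, qMat,
        Matrix.add_apply, Matrix.diagonal_apply, adjMat, Matrix.of_apply,
        Matrix.fromBlocks_apply₂₂, hDm, hYdef, smul_eq_mul, hadj, Sum.inr.injEq,
        Prod.mk.injEq]
      by_cases hij : i = j
      · subst hij
        by_cases hww : w = w'
        · subst hww
          have hnadj : ¬ H.Adj w.1 w.1 := H.loopless.irrefl w.1
          simp only [if_pos rfl, true_and, and_self, hnadj, if_neg hnadj, if_false,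
            hcast2 i w, if_pos (rfl : w = w), hadj2]
          simp [hcast2 i w]
          ring
        · have hne : ¬ (w = w') := hww
          simp [hne, hadj2]
      · simp [hij]
  -- invertibility of the block-diagonal piece
  have hxunit : IsUnit Y.det := isUnit_iff_ne_zero.mpr hx
  haveI hYinv : Invertible Y := Y.invertibleOfIsUnitDet hxunit
  have hYY : Y * Y⁻¹ = 1 := Matrix.mul_nonsing_inv Y hxunit
  have hco : Dm = (Matrix.blockDiagonal fun _ : Fin k => Y).submatrix
      (Equiv.prodComm (Fin k) {w : W // w ≠ u ∧ w ≠ v})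
      (Equiv.prodComm (Fin k) {w : W // w ≠ u ∧ w ≠ v}) := by
    ext p q
    simp [hDm, Matrix.blockDiagonal_apply, Matrix.submatrix_apply, eq_comm]
  have hco2 : Dinv = (Matrix.blockDiagonal fun _ : Fin k => Y⁻¹).submatrix
      (Equiv.prodComm (Fin k) {w : W // w ≠ u ∧ w ≠ v})
      (Equiv.prodComm (Fin k) {w : W // w ≠ u ∧ w ≠ v}) := by
    ext p q
    simp [hDinvdef, Matrix.blockDiagonal_apply, Matrix.submatrix_apply, eq_comm]
  have hDmul : Dm * Dinv = 1 := by
    rw [hco, hco2, Matrix.submatrix_mul_equiv, ← Matrix.blockDiagonal_mul]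
    simp only [hYY]
    rw [show (fun _ : Fin k => (1 : Matrix {w : W // w ≠ u ∧ w ≠ v}
        {w : W // w ≠ u ∧ w ≠ v} ℂ)) = (1 : Fin k → Matrix _ _ ℂ) from rfl,
      Matrix.blockDiagonal_one, Matrix.submatrix_one_equiv]
  haveI hDinvertible : Invertible Dm := invertibleOfRightInverse Dm _ hDmul
  have hInvOf : ⅟Dm = Dinv := invOf_eq_right_inv hDmul
  -- determinant of the block-diagonal piece
  have hdetD : Dm.det = Y.det ^ k := by
    rw [hco, Matrix.det_submatrix_equiv_self, Matrix.det_blockDiagonal]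
    simp
  -- coronal as a sum of entries of Y⁻¹
  have hcor : Γ = ∑ i, ∑ j, Y⁻¹ i j := rfl
  -- the Schur complement product
  have hprod : ∀ s t : V, (Bm * Dinv * Bmᵀ) s t
      = ((Finset.univ.filter fun i : Fin k =>
          (s = a i ∨ s = b i) ∧ (t = a i ∨ t = b i)).card : ℂ) * Γ := by
    intro s t
    have hin : ∀ p : Fin k × {w : W // w ≠ u ∧ w ≠ v},
        (Dinv * Bmᵀ) p t
          = -((if t = a p.1 ∨ t = b p.1 then (1 : ℂ) else 0) * (∑ w', Y⁻¹ p.2 w')) := by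
      intro p
      rw [Matrix.mul_apply]
      have hterm : ∀ q : Fin k × {w : W // w ≠ u ∧ w ≠ v},
          Dinv p q * Bmᵀ q t
            = -(if p.1 = q.1 then
                (if t = a q.1 ∨ t = b q.1 then (1 : ℂ) else 0) * Y⁻¹ p.2 q.2 else 0) := by
        intro q
        simp only [hDinvdef, hBm, Matrix.of_apply, Matrix.transpose_apply]
        by_cases h1 : p.1 = q.1 <;> by_cases h2 : t = a q.1 ∨ t = b q.1 <;>
          simp [h1, h2]
      rw [Finset.sum_congr rfl fun q _ => hterm q, Finset.sum_neg_distrib]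
      congr 1
      rw [Fintype.sum_prod_type]
      rw [Finset.sum_eq_single p.1]
      · simp [Finset.mul_sum]
      · intro j _ hj
        simp [Ne.symm hj]
      · intro h
        exact absurd (Finset.mem_univ _) h
    rw [Matrix.mul_assoc, Matrix.mul_apply]
    have hterm2 : ∀ p : Fin k × {w : W // w ≠ u ∧ w ≠ v},
        Bm s p * (Dinv * Bmᵀ) p t
          = (if (s = a p.1 ∨ s = b p.1) ∧ (t = a p.1 ∨ t = b p.1) then (1 : ℂ) else 0)
              * ∑ w', Y⁻¹ p.2 w' := by
      intro p
      rw [hin p]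
      simp only [hBm, Matrix.of_apply]
      by_cases h1 : s = a p.1 ∨ s = b p.1 <;> by_cases h2 : t = a p.1 ∨ t = b p.1 <;>
        simp [h1, h2]
    rw [Finset.sum_congr rfl fun p _ => hterm2 p, Fintype.sum_prod_type]
    calc (∑ i : Fin k, ∑ w : {w : W // w ≠ u ∧ w ≠ v},
          (if (s = a i ∨ s = b i) ∧ (t = a i ∨ t = b i) then (1 : ℂ) else 0)
            * ∑ w', Y⁻¹ w w')
        = ∑ i : Fin k,
            (if (s = a i ∨ s = b i) ∧ (t = a i ∨ t = b i) then (1 : ℂ) else 0)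
              * (∑ w, ∑ w', Y⁻¹ w w') := by
          refine Finset.sum_congr rfl fun i _ => ?_
          rw [Finset.mul_sum]
      _ = ((Finset.univ.filter fun i : Fin k =>
            (s = a i ∨ s = b i) ∧ (t = a i ∨ t = b i)).card : ℂ) * Γ := by
          rw [← Finset.sum_mul, Finset.sum_boole, hcor]
  -- the Schur complement identity
  have hmat : A1 - Bm * Dinv * Bmᵀ
      = x • (1 : Matrix V V ℂ) - (((r : ℂ) * (((m : ℂ) - 2) + Γ)) • (1 : Matrix V V ℂ)
          + qMat ℂ F + Γ • adjMat ℂ E) := by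
    ext s t
    have hentry := hprod s t
    simp only [Matrix.sub_apply, Matrix.add_apply, Matrix.smul_apply, Matrix.one_apply,
      hA1, qMat, adjMat, Matrix.of_apply, Matrix.diagonal_apply, smul_eq_mul] at hentry ⊢
    rw [hentry]
    by_cases hst : s = t
    · subst hst
      have h1 : (Finset.univ.filter fun i : Fin k =>
          (s = a i ∨ s = b i) ∧ (s = a i ∨ s = b i)).card = r := by
        rw [← hcount1 s]
        congr 1
        ext i
        simp only [Finset.mem_filter, and_self]
      have hnadj : ¬ E.Adj s s := E.loopless.irrefl s
      have hnadjF : ¬ F.Adj s s := F.loopless.irrefl s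
      simp only [if_pos rfl, h1, hnadj, hnadjF, if_false, if_true, ite_true,
        eq_self_iff_true]
      ring
    · have h2 := hcount2 s t hst
      have hnat : ((Finset.univ.filter fun i : Fin k =>
          (s = a i ∨ s = b i) ∧ (t = a i ∨ t = b i)).card : ℂ)
          = if E.Adj s t then 1 else 0 := by
        rw [h2]
        split_ifs <;> simp
      rw [hnat]
      simp only [if_neg hst]
      split_ifs <;> ring
  -- put it all together
  rw [hblock, Matrix.det_fromBlocks₂₂, hInvOf, hdetD, hmat]
end
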